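/- arXiv:1706.04742 — 4 statements merged into one kernel-verified Lean document; each statement's English description precedes it below -/
import Mathlib

section
/- Every 3-strong tournament is 1*-weakly connected; that is, for every pair of distinct vertices x, y of a 3-strong tournament T, there is a Hamiltonian directed path of T from x to y or from y to x. -/
variable {V : Type*}

/-- A tournament relation: irreflexive, and between any two distinct vertices
exactly one of the two possible arcs is present. -/
def IsTournament (r : V → V → Prop) : Prop :=
  (∀ v : V, ¬ r v v) ∧ ∀ u v : V, u ≠ v → (r u v ↔ ¬ r v u)

/-- Strong connectivity: every vertex reaches every other by a directed walk. -/
def StronglyConnected (r : V → V → Prop) : Prop :=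
  ∀ u v : V, Relation.ReflTransGen r u v

/-- `k`-strong: at least `k+1` vertices, and deleting any set of fewer than `k`
vertices leaves a strongly connected digraph. -/
def KStrong [Fintype V] (r : V → V → Prop) (k : ℕ) : Prop :=
  k + 1 ≤ Fintype.card V ∧
    ∀ S : Set V, S.ncard < k → ∀ u v : V, u ∉ S → v ∉ S →
      Relation.ReflTransGen (fun a b => a ∉ S ∧ b ∉ S ∧ r a b) u v

/-- A directed path from `u` to `v`, recorded as its (nodup) list of vertices. -/
def IsDipath (r : V → V → Prop) (u v : V) (p : List V) : Prop :=
  p.Chain' r ∧ p.Nodup ∧ p.head? = some u ∧ p.getLast? = some v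

/-- A Hamiltonian directed path from `u` to `v`: a directed path containing
every vertex. -/
def IsHamDipath (r : V → V → Prop) (u v : V) (p : List V) : Prop :=
  IsDipath r u v p ∧ ∀ w : V, w ∈ p

/-- A family of paths between `x` and `y` is internally disjoint if two distinct
paths share no vertex other than `x` and `y`. -/
def InternallyDisjoint (x y : V) {k : ℕ} (ps : Fin k → List V) : Prop :=
  ∀ i j : Fin k, i ≠ j → ∀ w : V, w ∈ ps i → w ∈ ps j → w = x ∨ w = y

/-- A strong `k*`-container between `x` and `y`: `k` internally disjoint directed
paths, all from `x` to `y` or all from `y` to `x`, whose union contains every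
vertex. -/
def StrongStarContainer (r : V → V → Prop) (x y : V) (k : ℕ) : Prop :=
  ∃ ps : Fin k → List V, Function.Injective ps ∧
    ((∀ i, IsDipath r x y (ps i)) ∨ (∀ i, IsDipath r y x (ps i))) ∧
    InternallyDisjoint x y ps ∧ (∀ w : V, ∃ i, w ∈ ps i)

/-- A weak `k*`-container between `x` and `y`: `k` internally disjoint directed
paths, each from `x` to `y` or from `y` to `x`, whose union contains every
vertex. -/
def WeakStarContainer (r : V → V → Prop) (x y : V) (k : ℕ) : Prop :=
  ∃ ps : Fin k → List V, Function.Injective ps ∧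
    (∀ i, IsDipath r x y (ps i) ∨ IsDipath r y x (ps i)) ∧
    InternallyDisjoint x y ps ∧ (∀ w : V, ∃ i, w ∈ ps i)

/-- The irregularity of the digraph is at most `k`:
`|d⁺(x) − d⁻(x)| ≤ k` for every vertex `x`. -/
def IrregularityLE (r : V → V → Prop) (k : ℕ) : Prop :=
  ∀ x : V, ((({y : V | r x y}.ncard : ℤ) - ({y : V | r y x}.ncard : ℤ)).natAbs) ≤ k




section Generic

variable {W : Type*}

lemma rtg_first {r : W → W → Prop} {a b : W} (h : Relation.ReflTransGen r a b)
    (hne : a ≠ b) : ∃ c, r a c := by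
  rcases h.cases_head with h | ⟨c, hc, _⟩
  · exact absurd h hne
  · exact ⟨c, hc⟩

lemma rtg_entry {r : W → W → Prop} {P : W → Prop} {a b : W}
    (h : Relation.ReflTransGen r a b) (ha : ¬ P a) (hb : P b) :
    ∃ p q, ¬ P p ∧ P q ∧ r p q := by
  induction h with
  | refl => exact absurd hb ha
  | @tail b' c hab hbc ih =>
    by_cases hPb : P b'
    · exact ih hPb
    · exact ⟨b', c, hPb, hb, hbc⟩

lemma rtg_path {r : W → W → Prop} {a b : W} (h : Relation.ReflTransGen r a b) :
    ∃ l : List W, l.Chain' r ∧ l.Nodup ∧ l.head? = some a ∧ l.getLast? = some b := by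
  induction h with
  | refl => exact ⟨[a], List.isChain_singleton _, by simp, rfl, rfl⟩
  | @tail b' c hab hbc ih =>
    obtain ⟨l, hch, hnd, hhd, hla⟩ := ih
    by_cases hc : c ∈ l
    · obtain ⟨l₁, l₂, rfl⟩ := List.append_of_mem hc
      refine ⟨l₁ ++ [c], ?_, ?_, ?_, List.getLast?_concat⟩
      · exact hch.prefix ⟨l₂, by simp⟩
      · exact hnd.sublist (List.IsPrefix.sublist ⟨l₂, by simp⟩)
      · rw [List.head?_append] at hhd ⊢
        simpa using hhd
    · refine ⟨l ++ [c], ?_, ?_, ?_, List.getLast?_concat⟩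
      · rw [List.Chain', List.isChain_append]
        refine ⟨hch, List.isChain_singleton _, ?_⟩
        intro p hp q hq
        simp only [List.head?_cons, Option.mem_def, Option.some.injEq] at hq
        rw [hla] at hp
        simp only [Option.mem_def, Option.some.injEq] at hp
        subst hp hq; exact hbc
      · rw [List.nodup_append]
        exact ⟨hnd, List.nodup_singleton _, fun a ha b hb hab => hc (by rw [List.mem_singleton] at hb; rw [← hb, ← hab]; exact ha)⟩
      · rw [List.head?_append, hhd]; rfl

end Generic


section Cyc
variable {W : Type*} {s : W → W → Prop}

/-- wrap condition for a cyclic list -/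
def Wrap (s : W → W → Prop) (l : List W) : Prop :=
  ∀ p ∈ l.getLast?, ∀ q ∈ l.head?, s p q

lemma head?_eq_get {l : List W} (h : 0 < l.length) :
    l.head? = some (l.get ⟨0, h⟩) := by
  cases l with
  | nil => simp at h
  | cons a t => rfl

lemma getLast?_eq_get {l : List W} (h : 0 < l.length) :
    l.getLast? = some (l.get ⟨l.length - 1, by omega⟩) := by
  have hne : l ≠ [] := List.length_pos_iff.mp h
  rw [List.getLast?_eq_getLast hne]
  simp [List.getLast_eq_getElem]

lemma rotate_one_cyc {l : List W} (hch : l.Chain' s) (hw : Wrap s l) :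
    (l.rotate 1).Chain' s ∧ Wrap s (l.rotate 1) := by
  cases l with
  | nil => simp [Wrap, List.Chain']
  | cons a t =>
    have hrot : (a :: t).rotate 1 = t ++ [a] := by
      simpa using List.rotate_cons_succ t a 0
    rw [hrot]
    rcases List.eq_nil_or_concat t with rfl | _
    · constructor
      · simp [List.Chain']
      · intro p hp q hq
        simp only [List.nil_append] at hp hq
        exact hw p hp q hq
    · have hct : t ≠ [] := by rintro rfl; simp_all
      obtain ⟨hab, hcht⟩ := List.isChain_cons.mp hch
      constructor
      · rw [List.Chain', List.isChain_append]
        refine ⟨hcht, List.isChain_singleton _, ?_⟩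
        intro p hp q hq
        simp only [List.head?_cons, Option.mem_def, Option.some.injEq] at hq
        subst hq
        refine hw p ?_ a rfl
        cases t with
        | nil => exact absurd rfl hct
        | cons b t' => rwa [List.getLast?_cons_cons]
      · intro p hp q hq
        rw [List.getLast?_concat] at hp
        rw [List.head?_append] at hq
        simp only [Option.mem_def, Option.some.injEq] at hp
        subst hp
        refine hab q ?_
        cases ht : t.head? with
        | none => exact absurd (List.head?_eq_none_iff.mp ht) hct
        | some z => rw [ht] at hq; simpa using hq

lemma rotate_cyc {l : List W} (hch : l.Chain' s) (hw : Wrap s l) (k : ℕ) :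
    (l.rotate k).Chain' s ∧ Wrap s (l.rotate k) := by
  induction k with
  | zero => simpa using ⟨hch, hw⟩
  | succ n ih =>
    have : l.rotate (n + 1) = (l.rotate n).rotate 1 := by
      rw [List.rotate_rotate]
    rw [this]
    exact rotate_one_cyc ih.1 ih.2

lemma mixed_pair (hIrr : ∀ v, ¬ s v v) (hT : ∀ u v : W, u ≠ v → (s u v ↔ ¬ s v u))
    {l : List W} {w : W} (hwl : w ∉ l)
    {a b : W} (hal : a ∈ l) (hbl : b ∈ l) (haw : s a w) (hwb : s w b) :
    ∃ (k : ℕ) (hk : k < l.length),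
      s (l.get ⟨k, hk⟩) w ∧
      s w (l.get ⟨(k+1) % l.length, Nat.mod_lt _ (by omega)⟩) := by
  by_contra hcon
  push_neg at hcon
  have hlen0 : 0 < l.length := List.length_pos_iff.mpr (List.ne_nil_of_mem hal)
  have claim : ∀ (j k : ℕ) (hk : k < l.length), s (l.get ⟨k, hk⟩) w →
      s (l.get ⟨(k + j) % l.length, Nat.mod_lt _ hlen0⟩) w := by
    intro j
    induction j with
    | zero =>
      intro k hk hs
      have hget : l.get ⟨(k + 0) % l.length, Nat.mod_lt _ hlen0⟩ = l.get ⟨k, hk⟩ := by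
        congr 1
        exact Fin.ext (by simp [Nat.mod_eq_of_lt hk])
      rwa [hget]
    | succ n ih =>
      intro k hk hs
      have h1 := ih k hk hs
      have h2 := hcon ((k + n) % l.length) (Nat.mod_lt _ hlen0) h1
      have hmem : l.get ⟨((k + n) % l.length + 1) % l.length, Nat.mod_lt _ hlen0⟩ ∈ l :=
        List.get_mem _ _
      have hne : l.get ⟨((k + n) % l.length + 1) % l.length, Nat.mod_lt _ hlen0⟩ ≠ w := by
        intro he; exact hwl (he ▸ hmem)
      have hs2 : s (l.get ⟨((k + n) % l.length + 1) % l.length, Nat.mod_lt _ hlen0⟩) w :=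
        (hT _ w hne).mpr h2
      have hidx : ((k + n) % l.length + 1) % l.length = (k + (n+1)) % l.length := by
        rw [Nat.mod_add_mod, Nat.add_assoc]
      have hget : l.get ⟨((k + n) % l.length + 1) % l.length, Nat.mod_lt _ hlen0⟩
          = l.get ⟨(k + (n+1)) % l.length, Nat.mod_lt _ hlen0⟩ := by
        congr 1
        exact Fin.ext hidx
      rwa [hget] at hs2
  obtain ⟨ka, hka⟩ := List.mem_iff_get.mp hal
  obtain ⟨kb, hkb⟩ := List.mem_iff_get.mp hbl
  have := claim (kb.val + l.length - ka.val) ka.val ka.isLt (by rw [hka]; exact haw)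
  have hidx : (ka.val + (kb.val + l.length - ka.val)) % l.length = kb.val := by
    have h1 : ka.val + (kb.val + l.length - ka.val) = kb.val + l.length := by
      have := ka.isLt; omega
    rw [h1, Nat.add_mod_right, Nat.mod_eq_of_lt kb.isLt]
  have hgeq : l.get ⟨(ka.val + (kb.val + l.length - ka.val)) % l.length, Nat.mod_lt _ hlen0⟩ = b := by
    have hfin : (⟨(ka.val + (kb.val + l.length - ka.val)) % l.length, Nat.mod_lt _ hlen0⟩ :
        Fin l.length) = kb := Fin.ext hidx
    rw [hfin, hkb]
  rw [hgeq] at this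
  have hbw : b ≠ w := fun he => hwl (he ▸ hbl)
  exact (hT b w hbw).mp this hwb

lemma attach_two (hIrr : ∀ v, ¬ s v v)
    {l : List W} (hch : l.Chain' s) (hnd : l.Nodup) (hw : Wrap s l) (hlen : 0 < l.length)
    {p q : W} (hpl : p ∉ l) (hql : q ∉ l) (hpq : p ≠ q)
    (hlp : ∀ a ∈ l, s a p) (hspq : s p q) (hql2 : ∀ a ∈ l, s q a) :
    ∃ l' : List W, l'.Chain' s ∧ l'.Nodup ∧ Wrap s l' ∧ l.length < l'.length := by
  refine ⟨l ++ [p, q], ?_, ?_, ?_, by simp⟩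
  · rw [List.Chain', List.isChain_append]
    refine ⟨hch, by simp [hspq], ?_⟩
    intro a ha b hb
    simp only [List.head?_cons, Option.mem_def, Option.some.injEq] at hb
    subst hb
    exact hlp a (List.mem_of_mem_getLast? ha)
  · rw [List.nodup_append]
    refine ⟨hnd, by simp [hpq], ?_⟩
    intro a ha b hb hab; subst hab
    simp only [List.mem_cons, List.mem_singleton, List.not_mem_nil, or_false] at hb
    rcases hb with rfl | rfl
    · exact hpl ha
    · exact hql ha
  · intro a ha b hb
    have h1 : (l ++ [p, q]).getLast? = some q := by
      rw [show l ++ [p, q] = (l ++ [p]) ++ [q] by simp, List.getLast?_concat]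
    rw [h1] at ha
    simp only [Option.mem_def, Option.some.injEq] at ha
    subst ha
    rw [List.head?_append, head?_eq_get hlen] at hb
    simp only [Option.or_some, Option.some_or, Option.mem_def, Option.some.injEq] at hb
    subst hb
    exact hql2 _ (List.get_mem _ _)

lemma extend_cyc (hIrr : ∀ v, ¬ s v v) (hT : ∀ u v : W, u ≠ v → (s u v ↔ ¬ s v u))
    (hStrong : ∀ u v, Relation.ReflTransGen s u v)
    {l : List W} (hch : l.Chain' s) (hnd : l.Nodup) (hw : Wrap s l) (hlen : 0 < l.length)
    {v : W} (hv : v ∉ l) :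
    ∃ l' : List W, l'.Chain' s ∧ l'.Nodup ∧ Wrap s l' ∧ l.length < l'.length := by
  have hlget : ∀ k (hk : k < l.length), l.get ⟨k, hk⟩ ∈ l := fun k hk => List.get_mem _ _
  by_cases hmix : ∃ w, w ∉ l ∧ (∃ a ∈ l, s a w) ∧ (∃ b ∈ l, s w b)
  · obtain ⟨w, hwl, ⟨a, hal, haw⟩, ⟨b, hbl, hwb⟩⟩ := hmix
    obtain ⟨k, hk, hkw, hwk⟩ := mixed_pair hIrr hT hwl hal hbl haw hwb
    set lr := l.rotate (k+1) with hlr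
    obtain ⟨hchr, hwr⟩ := rotate_cyc hch hw (k+1)
    have hlenr : lr.length = l.length := List.length_rotate _ _
    have hlr0 : 0 < lr.length := by omega
    have hgetlast : lr.get ⟨lr.length - 1, by omega⟩ = l.get ⟨k, hk⟩ := by
      rw [List.get_rotate]
      congr 1
      simp only [hlenr]
      congr 1
      have : l.length - 1 + (k + 1) = l.length + k := by omega
      rw [this, Nat.add_mod_left, Nat.mod_eq_of_lt hk]
    have hgethead : lr.get ⟨0, hlr0⟩ = l.get ⟨(k+1) % l.length, Nat.mod_lt _ (by omega)⟩ := by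
      rw [List.get_rotate]
      congr 1
      simp
    refine ⟨lr ++ [w], ?_, ?_, ?_, by simp [hlenr]⟩
    · rw [List.Chain', List.isChain_append]
      refine ⟨hchr, List.isChain_singleton _, ?_⟩
      intro a' ha' b' hb'
      simp only [List.head?_cons, Option.mem_def, Option.some.injEq] at hb'
      subst hb'
      rw [getLast?_eq_get hlr0] at ha'
      simp only [Option.mem_def, Option.some.injEq] at ha'
      subst ha'
      rw [hgetlast]; exact hkw
    · rw [List.nodup_append]
      refine ⟨List.nodup_rotate.mpr hnd, List.nodup_singleton _, ?_⟩
      intro a' ha' b' hb' hab'; subst hab'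
      simp only [List.mem_singleton] at hb'
      subst hb'
      exact hwl (List.mem_rotate.mp ha')
    · intro a' ha' b' hb'
      rw [List.getLast?_concat] at ha'
      simp only [Option.mem_def, Option.some.injEq] at ha'
      subst ha'
      rw [List.head?_append, head?_eq_get hlr0] at hb'
      simp only [Option.or_some, Option.some_or, Option.mem_def, Option.some.injEq] at hb'
      subst hb'
      rw [hgethead]; exact hwk
  · push_neg at hmix
    have hclass : ∀ w, w ∉ l → (∀ a ∈ l, s w a) ∨ (∀ a ∈ l, s a w) := by
      intro w hwl
      by_cases hin : ∃ a ∈ l, s a w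
      · obtain ⟨a, hal, haw⟩ := hin
        right
        intro b hbl
        have hbw' : b ≠ w := fun he => hwl (he ▸ hbl)
        exact (hT b w hbw').mpr (hmix w hwl ⟨a, hal, haw⟩ b hbl)
      · push_neg at hin
        left
        intro a hal
        have : a ≠ w := fun he => hwl (he ▸ hal)
        exact (hT w a (Ne.symm this)).mpr (fun hsw => hin a hal hsw)
    have hhead : l.get ⟨0, hlen⟩ ∈ l := List.get_mem _ _
    have key : ∃ p q, p ∉ l ∧ q ∉ l ∧ p ≠ q ∧ (∀ a ∈ l, s a p) ∧ s p q ∧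
        (∀ a ∈ l, s q a) := by
      rcases hclass v hv with hA | hB
      · have hnP : ¬ (∀ a ∈ l, s (l.get ⟨0, hlen⟩) a) := fun h => hIrr _ (h _ hhead)
        obtain ⟨p, q, hp, hq, hpq⟩ :=
          rtg_entry (P := fun w => ∀ a ∈ l, s w a) (hStrong (l.get ⟨0, hlen⟩) v) hnP hA
        have hpq' : p ≠ q := fun he => hIrr p (he ▸ hpq)
        have hql : q ∉ l := fun hql => hIrr q (hq q hql)
        have hpl : p ∉ l := fun hpl => (hT p q hpq').mp hpq (hq p hpl)
        rcases hclass p hpl with h1 | h2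
        · exact absurd h1 hp
        · exact ⟨p, q, hpl, hql, hpq', h2, hpq, hq⟩
      · have hnQ : ¬ ¬ (∀ a ∈ l, s a v) := not_not_intro hB
        have hQh : ¬ (∀ a ∈ l, s a (l.get ⟨0, hlen⟩)) := fun h => hIrr _ (h _ hhead)
        obtain ⟨p, q, hp, hq, hpq⟩ :=
          rtg_entry (P := fun w => ¬ (∀ a ∈ l, s a w)) (hStrong v (l.get ⟨0, hlen⟩)) hnQ hQh
        have hp' : ∀ a ∈ l, s a p := not_not.mp hp
        have hpq' : p ≠ q := fun he => hIrr p (he ▸ hpq)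
        have hpl : p ∉ l := fun hpl => hIrr p (hp' p hpl)
        have hql : q ∉ l := fun hql => (hT p q hpq').mp hpq (hp' q hql)
        rcases hclass q hql with h1 | h2
        · exact ⟨p, q, hpl, hql, hpq', hp', hpq, h1⟩
        · exact absurd h2 hq
    obtain ⟨p, q, h1, h2, h3, h4, h5, h6⟩ := key
    exact attach_two hIrr hch hnd hw hlen h1 h2 h3 h4 h5 h6


theorem camion [Fintype W] (hIrr : ∀ v : W, ¬ s v v)
    (hT : ∀ u v : W, u ≠ v → (s u v ↔ ¬ s v u))
    (hStrong : ∀ u v : W, Relation.ReflTransGen s u v)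
    (hcard : 2 ≤ Fintype.card W) :
    ∃ l : List W, l.Chain' s ∧ l.Nodup ∧ (∀ w : W, w ∈ l) ∧ Wrap s l := by
  classical
  have loop : ∀ (j : ℕ) (l : List W), l.Chain' s → l.Nodup → Wrap s l → 0 < l.length →
      Fintype.card W ≤ l.length + j →
      ∃ l' : List W, l'.Chain' s ∧ l'.Nodup ∧ (∀ w : W, w ∈ l') ∧ Wrap s l' := by
    intro j
    induction j with
    | zero =>
      intro l hch hnd hw hlen hcard'
      refine ⟨l, hch, hnd, ?_, hw⟩
      intro w
      have h1 : l.toFinset.card = l.length := List.toFinset_card_of_nodup hnd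
      have h2 : l.toFinset = Finset.univ := by
        apply Finset.eq_univ_of_card
        have h3 : l.toFinset.card ≤ Fintype.card W := Finset.card_le_univ _
        omega
      have : w ∈ l.toFinset := h2 ▸ Finset.mem_univ w
      exact List.mem_toFinset.mp this
    | succ n ih =>
      intro l hch hnd hw hlen hcard'
      by_cases hall : ∀ w : W, w ∈ l
      · exact ⟨l, hch, hnd, hall, hw⟩
      · push_neg at hall
        obtain ⟨v, hv⟩ := hall
        obtain ⟨l', h1, h2, h3, h4⟩ := extend_cyc hIrr hT hStrong hch hnd hw hlen hv
        exact ih l' h1 h2 h3 (by omega) (by omega)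
  obtain ⟨a, b, hab⟩ := Fintype.exists_pair_of_one_lt_card (α := W) (by omega)
  have harc : ∃ a b : W, s a b := by
    by_cases h : s a b
    · exact ⟨a, b, h⟩
    · exact ⟨b, a, (hT b a hab.symm).mpr h⟩
  obtain ⟨a', b', hab'⟩ := harc
  obtain ⟨l, hch, hnd, hhd, hla⟩ := rtg_path (hStrong b' a')
  have hlen : 0 < l.length := by
    cases l with
    | nil => simp at hhd
    | cons x t => simp
  refine loop (Fintype.card W) l hch hnd ?_ hlen (by omega)
  intro p hp q hq
  rw [hla] at hp
  rw [hhd] at hq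
  simp only [Option.mem_def, Option.some.injEq] at hp hq
  subst hp; subst hq
  exact hab'

end Cyc


section Helpers

lemma range'_head? (a : ℕ) {n : ℕ} (h : 0 < n) : (List.range' a n).head? = some a := by
  cases n with
  | zero => omega
  | succ n => rfl

lemma length_pos_of_l {W : Type*} {l : List W} {n : ℕ} (hlen : l.length = n) (h : 0 < n) :
    0 < l.length := by omega

lemma getLast?_eq_get' {W : Type*} {l : List W} (h : 0 < l.length) :
    l.getLast? = some (l.get ⟨l.length - 1, by omega⟩) := by
  have hne : l ≠ [] := List.length_pos_iff.mp h
  rw [List.getLast?_eq_getLast hne]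
  simp [List.getLast_eq_getElem]

lemma range'_getLast? (a : ℕ) {n : ℕ} (h : 0 < n) :
    (List.range' a n).getLast? = some (a + n - 1) := by
  rw [getLast?_eq_get' (by simpa using h)]
  congr 1
  simp [List.getElem_range']
  omega

lemma chain'_range' {R : ℕ → ℕ → Prop} (a n : ℕ) (h : ∀ k, R k (k + 1)) :
    (List.range' a n).Chain' R := by
  rw [List.Chain', List.isChain_iff_getElem]
  intro k hk
  simp only [List.length_range'] at hk
  simp only [List.get_eq_getElem, List.getElem_range']
  have : a + 1 * (k + 1) = (a + 1 * k) + 1 := by omega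
  rw [this]
  exact h _

section Build
variable {V : Type*} (r : V → V → Prop)

lemma build_path (hIrr : ∀ v, ¬ r v v)
    (x y : V) (hxy : x ≠ y) (m : ℕ) (hm : 2 ≤ m) (u : ZMod m → V)
    (huinj : Function.Injective u) (hune : ∀ i, u i ≠ x ∧ u i ≠ y)
    (hucov : ∀ v : V, v ≠ x → v ≠ y → ∃ i, u i = v)
    (a b : V) (hab : a = x ∧ b = y ∨ a = y ∧ b = x)
    (i : ZMod m) (os : List ℕ)
    (hnd : os.Nodup) (hlt : ∀ o ∈ os, o < m) (hlen : os.length = m)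
    (hch : os.Chain' (fun o o' : ℕ => r (u (i + (o : ZMod m))) (u (i + (o' : ZMod m)))))
    (hhd : ∀ o ∈ os.head?, r a (u (i + o)))
    (hla : ∀ o ∈ os.getLast?, r (u (i + o)) b) :
    ∃ p : List V, IsHamDipath r x y p ∨ IsHamDipath r y x p := by
  classical
  haveI : NeZero m := ⟨by omega⟩
  have habne : a ≠ b := by
    rcases hab with ⟨rfl, rfl⟩ | ⟨rfl, rfl⟩
    · exact hxy
    · exact hxy.symm
  have hune' : ∀ i', u i' ≠ a ∧ u i' ≠ b := by
    intro i'
    rcases hab with ⟨rfl, rfl⟩ | ⟨rfl, rfl⟩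
    · exact hune i'
    · exact ⟨(hune i').2, (hune i').1⟩
  set f : ℕ → V := fun o => u (i + o) with hf
  set inner : List V := os.map f with hinner
  have hosne : os ≠ [] := by
    intro h
    rw [h] at hlen
    simp at hlen
    omega
  have hinne : inner ≠ [] := by simp [hinner, hosne]
  have hmemi : ∀ w ∈ inner, ∃ o ∈ os, w = f o := by
    intro w hw
    obtain ⟨o, ho, rfl⟩ := List.mem_map.mp hw
    exact ⟨o, ho, rfl⟩
  have hpath : IsHamDipath r a b (a :: (inner ++ [b])) := by
    refine ⟨⟨?_, ?_, ?_, ?_⟩, ?_⟩ <;> skip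
    · rw [List.Chain', List.isChain_cons]
      constructor
      · intro q hq
        rw [List.head?_append, List.head?_map] at hq
        cases hos : os.head? with
        | none => exact absurd (List.head?_eq_none_iff.mp hos) hosne
        | some o =>
          rw [hos] at hq
          simp only [Option.map_some, Option.or_some, Option.some_or, Option.mem_def,
            Option.some.injEq] at hq
          subst hq
          exact hhd o (by rw [hos]; rfl)
      · rw [List.isChain_append]
        refine ⟨?_, List.isChain_singleton _, ?_⟩
        · exact (List.isChain_map f).mpr hch
        · intro p hp q hq
          simp only [List.head?_cons, Option.mem_def, Option.some.injEq] at hq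
          subst hq
          rw [hinner, List.getLast?_map] at hp
          cases hos : os.getLast? with
          | none => rw [hos] at hp; simp at hp
          | some o =>
            rw [hos] at hp
            simp only [Option.map_some, Option.mem_def, Option.some.injEq] at hp
            subst hp
            exact hla o (by rw [hos]; rfl)
    · rw [List.nodup_cons]
      constructor
      · intro hmem
        rcases List.mem_append.mp hmem with h | h
        · obtain ⟨o, ho, heq⟩ := hmemi a h
          exact (hune' (i + o)).1 heq.symm
        · simp only [List.mem_singleton] at h
          exact habne h
      · rw [List.nodup_append]
        refine ⟨?_, List.nodup_singleton _, ?_⟩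
        · rw [hinner]
          refine List.Nodup.map_on ?_ hnd
          intro o₁ h₁ o₂ h₂ hfeq
          have : i + (o₁ : ZMod m) = i + (o₂ : ZMod m) := huinj hfeq
          have : (o₁ : ZMod m) = (o₂ : ZMod m) := by
            have := add_left_cancel this
            exact this
          calc o₁ = ((o₁ : ZMod m)).val := (ZMod.val_cast_of_lt (hlt _ h₁)).symm
            _ = ((o₂ : ZMod m)).val := by rw [this]
            _ = o₂ := ZMod.val_cast_of_lt (hlt _ h₂)
        · intro w hw w2 hw2 hww; subst hww
          simp only [List.mem_singleton] at hw2
          obtain ⟨o, ho, heq⟩ := hmemi w hw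
          rw [hw2] at heq
          exact (hune' (i + o)).2 heq.symm
    · rfl
    · rw [show a :: (inner ++ [b]) = (a :: inner) ++ [b] from rfl]
      exact List.getLast?_concat
    · intro w
      by_cases hwa : w = a
      · subst hwa; exact List.mem_cons_self
      by_cases hwb : w = b
      · subst hwb
        exact List.mem_cons_of_mem _ (List.mem_append_right _ (List.mem_singleton_self _))
      have hwx : w ≠ x ∧ w ≠ y := by
        rcases hab with ⟨rfl, rfl⟩ | ⟨rfl, rfl⟩
        · exact ⟨hwa, hwb⟩
        · exact ⟨hwb, hwa⟩
      obtain ⟨j, rfl⟩ := hucov w hwx.1 hwx.2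
      have hosall : ∀ o' < m, o' ∈ os := by
        intro o' ho'
        have hsub : os.toFinset ⊆ Finset.range m := by
          intro o'' ho''
          exact Finset.mem_range.mpr (hlt _ (List.mem_toFinset.mp ho''))
        have heq : os.toFinset = Finset.range m :=
          Finset.eq_of_subset_of_card_le hsub
            (by rw [Finset.card_range, List.toFinset_card_of_nodup hnd, hlen])
        have : o' ∈ os.toFinset := heq ▸ Finset.mem_range.mpr ho'
        exact List.mem_toFinset.mp this
      have hoin : ((j - i).val : ℕ) ∈ os := hosall _ (ZMod.val_lt _)
      have : u j = f ((j - i).val) := by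
        rw [hf]
        congr 1
        rw [ZMod.natCast_rightInverse (j - i)]
        ring
      rw [this]
      exact List.mem_cons_of_mem _ (List.mem_append_left _ (List.mem_map_of_mem hoin))
  refine ⟨a :: (inner ++ [b]), ?_⟩
  rcases hab with ⟨rfl, rfl⟩ | ⟨rfl, rfl⟩
  · exact Or.inl hpath
  · exact Or.inr hpath

end Build
end Helpers

section MainAux
variable {V : Type*}

theorem main_aux [Fintype V] (r : V → V → Prop) (hT : IsTournament r) (h3 : KStrong r 3)
    (x y : V) (hxy : x ≠ y) (m : ℕ) (hm : 2 ≤ m) (u : ZMod m → V)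
    (huinj : Function.Injective u)
    (hune : ∀ i, u i ≠ x ∧ u i ≠ y)
    (hucov : ∀ v : V, v ≠ x → v ≠ y → ∃ i, u i = v)
    (huedge : ∀ i, r (u i) (u (i + 1))) :
    ∃ p : List V, IsHamDipath r x y p ∨ IsHamDipath r y x p := by
  classical
  haveI : NeZero m := ⟨by omega⟩
  obtain ⟨hIrr, hTiff⟩ := hT
  obtain ⟨hcV, hS⟩ := h3
  have asym : ∀ {a b : V}, r a b → ¬ r b a := by
    intro a b hab hba
    by_cases h : a = b
    · exact hIrr a (h ▸ hab)
    · exact (hTiff a b h).mp hab hba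
  have tot : ∀ {a b : V}, a ≠ b → ¬ r b a → r a b := fun h hn => (hTiff _ _ h).mpr hn
  have hcast : ∀ {t : ℕ}, t < m → ((t : ZMod m)).val = t := fun h => ZMod.val_cast_of_lt h
  have hUne0 : ∀ {t : ℕ}, 0 < t → t < m → ((t : ZMod m)) ≠ (0 : ZMod m) := by
    intro t h0 hm' he
    have h1 := hcast hm'
    rw [he] at h1
    simp only [ZMod.val_zero] at h1
    omega
  have hval_id : ∀ z : ZMod m, ((z.val : ℕ) : ZMod m) = z := fun z => ZMod.natCast_rightInverse z
  have hnegcast : ∀ {t : ℕ}, t ≤ m → ((m - t : ℕ) : ZMod m) = - (t : ZMod m) := by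
    intro t ht
    rw [Nat.cast_sub ht, ZMod.natCast_self]
    ring
  -- Case 1 : wrap path x → cycle → y
  by_cases hc1 : ∃ i : ZMod m, r x (u i) ∧ r (u (i - 1)) y
  · obtain ⟨i, h1, h2⟩ := hc1
    apply build_path r hIrr x y hxy m hm u huinj hune hucov x y (Or.inl ⟨rfl, rfl⟩) i
      (List.range' 0 m) List.nodup_range'
      (by intro o ho; rw [List.mem_range'_1] at ho; omega) (by simp)
    · apply chain'_range'
      intro k
      have e : ((k + 1 : ℕ) : ZMod m) = (k : ZMod m) + 1 := by push_cast; ring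
      rw [e, ← add_assoc]
      exact huedge _
    · intro o ho
      rw [range'_head? 0 (by omega)] at ho
      simp only [Option.mem_def, Option.some.injEq] at ho
      subst ho
      simpa using h1
    · intro o ho
      rw [range'_getLast? 0 (by omega)] at ho
      simp only [Option.mem_def, Option.some.injEq] at ho
      subst ho
      have e : i + ((0 + m - 1 : ℕ) : ZMod m) = i - 1 := by
        rw [show (0 + m - 1 : ℕ) = m - 1 from by omega, hnegcast (by omega)]
        push_cast
        ring
      rw [e]
      exact h2
  by_cases hc2 : ∃ i : ZMod m, r y (u i) ∧ r (u (i - 1)) x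
  · obtain ⟨i, h1, h2⟩ := hc2
    apply build_path r hIrr x y hxy m hm u huinj hune hucov y x (Or.inr ⟨rfl, rfl⟩) i
      (List.range' 0 m) List.nodup_range'
      (by intro o ho; rw [List.mem_range'_1] at ho; omega) (by simp)
    · apply chain'_range'
      intro k
      have e : ((k + 1 : ℕ) : ZMod m) = (k : ZMod m) + 1 := by push_cast; ring
      rw [e, ← add_assoc]
      exact huedge _
    · intro o ho
      rw [range'_head? 0 (by omega)] at ho
      simp only [Option.mem_def, Option.some.injEq] at ho
      subst ho
      simpa using h1
    · intro o ho
      rw [range'_getLast? 0 (by omega)] at ho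
      simp only [Option.mem_def, Option.some.injEq] at ho
      subst ho
      have e : i + ((0 + m - 1 : ℕ) : ZMod m) = i - 1 := by
        rw [show (0 + m - 1 : ℕ) = m - 1 from by omega, hnegcast (by omega)]
        push_cast
        ring
      rw [e]
      exact h2
  push_neg at hc1 hc2
  have hAB1 : ∀ i, r x (u i) → r y (u (i - 1)) := by
    intro i hi
    exact tot (Ne.symm (hune (i - 1)).2) (hc1 i hi)
  have hAB2 : ∀ i, r y (u i) → r x (u (i - 1)) := by
    intro i hi
    exact tot (Ne.symm (hune (i - 1)).1) (hc2 i hi)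
  have hdisj : ∀ i, ¬ (r x (u i) ∧ r y (u i)) := by
    rintro i ⟨hxi, hyi⟩
    have hall : ∀ k : ℕ, r x (u (i - k)) ∧ r y (u (i - k)) := by
      intro k
      induction k with
      | zero => simpa using And.intro hxi hyi
      | succ n ih =>
        have e : i - ((n + 1 : ℕ) : ZMod m) = (i - (n : ℕ)) - 1 := by push_cast; ring
        rw [e]
        exact ⟨hAB2 _ ih.2, hAB1 _ ih.1⟩
    have hallj : ∀ j : ZMod m, r x (u j) ∧ r y (u j) := by
      intro j
      have h := hall ((i - j).val)
      rwa [hval_id, sub_sub_cancel] at h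
    have hsc := hS ∅ (by simp) (u 0) x (by simp) (by simp)
    obtain ⟨p, q, hp, hq, hpq⟩ := rtg_entry (P := fun w => w = x ∨ w = y) hsc
      (by rintro (h | h)
          · exact (hune 0).1 h
          · exact (hune 0).2 h) (Or.inl rfl)
    obtain ⟨-, -, hrpq⟩ := hpq
    push_neg at hp
    obtain ⟨k, rfl⟩ := hucov p hp.1 hp.2
    rcases hq with rfl | rfl
    · exact asym (hallj k).1 hrpq
    · exact asym (hallj k).2 hrpq
  have hAne : ∃ i, r x (u i) := by
    have hsc := hS {y} (by simp) x (u 0) (by simp [hxy]) (by simp [(hune 0).2])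
    obtain ⟨c, hcc⟩ := rtg_first hsc (Ne.symm (hune 0).1)
    obtain ⟨-, hc2', hc3⟩ := hcc
    have hcx : c ≠ x := fun he => hIrr x (he ▸ hc3)
    have hcy : c ≠ y := by simpa using hc2'
    obtain ⟨i, rfl⟩ := hucov c hcx hcy
    exact ⟨i, hc3⟩
  obtain ⟨i₀, hi₀⟩ := hAne
  have hABall : ∀ j : ZMod m, r x (u j) ∨ r y (u j) := by
    have hk : ∀ k : ℕ, r x (u (i₀ - k)) ∨ r y (u (i₀ - k)) := by
      intro k
      induction k with
      | zero => simpa using Or.inl hi₀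
      | succ n ih =>
        have e : i₀ - ((n + 1 : ℕ) : ZMod m) = (i₀ - (n : ℕ)) - 1 := by push_cast; ring
        rw [e]
        rcases ih with h | h
        · exact Or.inr (hAB1 _ h)
        · exact Or.inl (hAB2 _ h)
    intro j
    have h := hk ((i₀ - j).val)
    rwa [hval_id, sub_sub_cancel] at h
  have hAA : ∀ i, r x (u i) → r x (u (i - 2)) := by
    intro i hi
    have h2 := hAB2 _ (hAB1 i hi)
    rwa [sub_sub, one_add_one_eq_two] at h2
  have hBB : ∀ i, r y (u i) → r y (u (i - 2)) := by
    intro i hi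
    have h2 := hAB1 _ (hAB2 i hi)
    rwa [sub_sub, one_add_one_eq_two] at h2
  have houty : ∀ i, r x (u i) → r (u i) y := by
    intro i hi
    exact tot (hune i).2 (fun h => hdisj i ⟨hi, h⟩)
  have houtx : ∀ i, r y (u i) → r (u i) x := by
    intro i hi
    exact tot (hune i).1 (fun h => hdisj i ⟨h, hi⟩)
  have hsucc : ∀ i, r x (u i) → r y (u (i + 1)) := by
    intro i hi
    rcases hABall (i + 1) with h | h
    · have h2 := hAB1 _ h
      rw [add_sub_cancel_right] at h2
      exact absurd (And.intro hi h2) (hdisj i)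
    · exact h
  have hsucc' : ∀ i, r y (u i) → r x (u (i + 1)) := by
    intro i hi
    rcases hABall (i + 1) with h | h
    · exact h
    · have h2 := hAB2 _ h
      rw [add_sub_cancel_right] at h2
      exact absurd (And.intro h2 hi) (hdisj i)
  have hmeven : m % 2 = 0 := by
    by_contra hodd
    have h2inv : (2 : ZMod m) * (((m + 1) / 2 : ℕ) : ZMod m) = 1 := by
      have e : (2 * ((m + 1) / 2) : ℕ) = m + 1 := by omega
      calc (2 : ZMod m) * (((m + 1) / 2 : ℕ) : ZMod m)
          = ((2 * ((m + 1) / 2) : ℕ) : ZMod m) := by push_cast; ring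
        _ = ((m + 1 : ℕ) : ZMod m) := by rw [e]
        _ = 1 := by push_cast [ZMod.natCast_self]; ring
    have hstep : ∀ k : ℕ, r x (u (i₀ - 2 * (k : ZMod m))) := by
      intro k
      induction k with
      | zero => simpa using hi₀
      | succ n ih =>
        have e : i₀ - 2 * ((n + 1 : ℕ) : ZMod m) = (i₀ - 2 * (n : ZMod m)) - 2 := by
          push_cast; ring
        rw [e]
        exact hAA _ ih
    have hallx : ∀ j : ZMod m, r x (u j) := by
      intro j
      have h := hstep (((i₀ - j) * (((m + 1) / 2 : ℕ) : ZMod m)).val)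
      rw [hval_id] at h
      have e : i₀ - 2 * ((i₀ - j) * (((m + 1) / 2 : ℕ) : ZMod m)) = j := by
        have e2 : (2 : ZMod m) * ((i₀ - j) * (((m + 1) / 2 : ℕ) : ZMod m)) = i₀ - j := by
          calc (2 : ZMod m) * ((i₀ - j) * (((m + 1) / 2 : ℕ) : ZMod m))
              = (i₀ - j) * ((2 : ZMod m) * (((m + 1) / 2 : ℕ) : ZMod m)) := by ring
            _ = (i₀ - j) * 1 := by rw [h2inv]
            _ = i₀ - j := mul_one _
        rw [e2, sub_sub_cancel]
      rw [e] at h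
      exact h
    exact hdisj _ ⟨hallx _, hAB1 i₀ hi₀⟩
  -- Step 4: single-vertex insertion
  by_cases hc3 : ∃ (i : ZMod m) (t : ℕ), 1 ≤ t ∧ t ≤ m - 2 ∧
      r (u (i + (t : ZMod m))) (u i) ∧ r (u i) (u (i + (t : ZMod m) + 1))
  · obtain ⟨i, t, ht1, ht2, hin, hout⟩ := hc3
    have hos_nd : (List.range' 1 t ++ (0 :: List.range' (t + 1) (m - 1 - t))).Nodup := by
      rw [List.nodup_append]
      refine ⟨List.nodup_range', ?_, ?_⟩
      · rw [List.nodup_cons]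
        refine ⟨?_, List.nodup_range'⟩
        rw [List.mem_range'_1]
        omega
      · intro o ho o2 ho2 hoo; subst hoo
        rw [List.mem_range'_1] at ho
        rcases List.mem_cons.mp ho2 with h | h
        · omega
        · rw [List.mem_range'_1] at h
          omega
    have hos_lt : ∀ o ∈ List.range' 1 t ++ (0 :: List.range' (t + 1) (m - 1 - t)), o < m := by
      intro o ho
      rcases List.mem_append.mp ho with h | h
      · rw [List.mem_range'_1] at h; omega
      · rcases List.mem_cons.mp h with h | h
        · omega
        · rw [List.mem_range'_1] at h; omega
    have hos_len : (List.range' 1 t ++ (0 :: List.range' (t + 1) (m - 1 - t))).length = m := by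
      simp only [List.length_append, List.length_range', List.length_cons]
      omega
    have hos_ch : (List.range' 1 t ++ (0 :: List.range' (t + 1) (m - 1 - t))).Chain'
        (fun o o' : ℕ => r (u (i + (o : ZMod m))) (u (i + (o' : ZMod m)))) := by
      rw [List.Chain', List.isChain_append]
      refine ⟨chain'_range' _ _ (fun k => ?_), ?_, ?_⟩
      · have e : ((k + 1 : ℕ) : ZMod m) = (k : ZMod m) + 1 := by push_cast; ring
        rw [e, ← add_assoc]
        exact huedge _
      · rw [List.isChain_cons]
        refine ⟨?_, chain'_range' _ _ (fun k => ?_)⟩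
        · intro q hq
          rw [range'_head? _ (by omega)] at hq
          simp only [Option.mem_def, Option.some.injEq] at hq
          subst hq
          have e : i + ((t + 1 : ℕ) : ZMod m) = i + (t : ZMod m) + 1 := by push_cast; ring
          have e0 : i + ((0 : ℕ) : ZMod m) = i := by push_cast; ring
          rw [e, e0]
          exact hout
        · have e : ((k + 1 : ℕ) : ZMod m) = (k : ZMod m) + 1 := by push_cast; ring
          rw [e, ← add_assoc]
          exact huedge _
      · intro p hp q hq
        rw [range'_getLast? _ (by omega)] at hp
        simp only [List.head?_cons, Option.mem_def, Option.some.injEq] at hp hq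
        subst hp; subst hq
        have e : i + ((1 + t - 1 : ℕ) : ZMod m) = i + (t : ZMod m) := by
          rw [show (1 + t - 1 : ℕ) = t from by omega]
        have e0 : i + ((0 : ℕ) : ZMod m) = i := by push_cast; ring
        rw [e, e0]
        exact hin
    have hos_hd : (List.range' 1 t ++ (0 :: List.range' (t + 1) (m - 1 - t))).head? = some 1 := by
      rw [List.head?_append, range'_head? _ (by omega)]
      rfl
    have hos_la : (List.range' 1 t ++ (0 :: List.range' (t + 1) (m - 1 - t))).getLast?
        = some (m - 1) := by
      have h2 : (List.range' (t + 1) (m - 1 - t)) ≠ [] := by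
        simp only [ne_eq, List.range'_eq_nil_iff]
        omega
      have h3 : (0 :: List.range' (t + 1) (m - 1 - t)).getLast? = some (m - 1) := by
        cases hrl : List.range' (t + 1) (m - 1 - t) with
        | nil => exact absurd hrl h2
        | cons z zs =>
          rw [List.getLast?_cons_cons, ← hrl, range'_getLast? _ (by omega)]
          congr 1
          omega
      rw [List.getLast?_append, h3]
      rfl
    have hend : i + ((m - 1 : ℕ) : ZMod m) = i - 1 := by
      rw [hnegcast (by omega)]
      push_cast
      ring
    rcases hABall i with hiA | hiB
    · apply build_path r hIrr x y hxy m hm u huinj hune hucov y x (Or.inr ⟨rfl, rfl⟩) i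
        _ hos_nd hos_lt hos_len hos_ch
      · intro o ho
        rw [hos_hd] at ho
        simp only [Option.mem_def, Option.some.injEq] at ho
        subst ho
        have e : i + ((1 : ℕ) : ZMod m) = i + 1 := by push_cast; ring
        rw [e]
        exact hsucc i hiA
      · intro o ho
        rw [hos_la] at ho
        simp only [Option.mem_def, Option.some.injEq] at ho
        subst ho
        rw [hend]
        exact houtx _ (hAB1 i hiA)
    · apply build_path r hIrr x y hxy m hm u huinj hune hucov x y (Or.inl ⟨rfl, rfl⟩) i
        _ hos_nd hos_lt hos_len hos_ch
      · intro o ho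
        rw [hos_hd] at ho
        simp only [Option.mem_def, Option.some.injEq] at ho
        subst ho
        have e : i + ((1 : ℕ) : ZMod m) = i + 1 := by push_cast; ring
        rw [e]
        exact hsucc' i hiB
      · intro o ho
        rw [hos_la] at ho
        simp only [Option.mem_def, Option.some.injEq] at ho
        subst ho
        rw [hend]
        exact houty _ (hAB2 i hiB)
  push_neg at hc3
  -- hc3 : ∀ i t, 1 ≤ t → t ≤ m - 2 → r (u (i + t)) (u i) → ¬ r (u i) (u (i + t + 1))
  have hgdown : ∀ (i : ZMod m) (t : ℕ), 1 ≤ t → t ≤ m - 2 →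
      r (u i) (u (i + ((t + 1 : ℕ) : ZMod m))) → r (u i) (u (i + (t : ZMod m))) := by
    intro i t h1 h2 hr
    by_contra hnr
    have hne : u (i + (t : ZMod m)) ≠ u i := by
      intro he
      have he2 := huinj he
      have ht0 : ((t : ℕ) : ZMod m) = 0 := by
        have := add_left_cancel (a := i) (b := (t : ZMod m)) (c := 0) (by simpa using he2)
        exact this
      exact hUne0 (by omega) (by omega) ht0
    have hr2 : r (u (i + (t : ZMod m))) (u i) := tot hne hnr
    have e : i + ((t + 1 : ℕ) : ZMod m) = i + (t : ZMod m) + 1 := by push_cast; ring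
    rw [e] at hr
    exact hc3 i t h1 h2 hr2 hr
  have hgall : ∀ (i : ZMod m) (t : ℕ), 1 ≤ t → t ≤ m - 1 → r (u i) (u (i + (t : ZMod m))) →
      ∀ s', 1 ≤ s' → s' ≤ t → r (u i) (u (i + (s' : ZMod m))) := by
    intro i t
    induction t with
    | zero => intro h1; exact absurd h1 (by omega)
    | succ n ih =>
      intro h1 h2 hr s' h4 h5
      by_cases hs : s' = n + 1
      · subst hs; exact hr
      · have hn1 : 1 ≤ n := by omega
        have hrn : r (u i) (u (i + (n : ZMod m))) := hgdown i n hn1 (by omega) hr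
        exact ih hn1 (by omega) hrn s' h4 (by omega)
  have hg2 : ∀ i : ZMod m, r (u i) (u (i + 2)) := by
    intro i
    by_contra hni
    have hno : ∀ t : ℕ, 2 ≤ t → t ≤ m - 1 → ¬ r (u i) (u (i + (t : ZMod m))) := by
      intro t h2 h3 hr
      apply hni
      have h := hgall i t (by omega) h3 hr 2 (by omega) h2
      have e : i + ((2 : ℕ) : ZMod m) = i + 2 := by push_cast; ring
      rwa [e] at h
    rcases hABall i with hiA | hiB
    · have hz : r (u i) y := houty i hiA
      have hnx : ¬ r (u i) x := asym hiA
      have hsc := hS {u (i + 1), y} (by rw [Set.ncard_pair (hune (i + 1)).2]; omega)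
        (u i) x
        (by
          simp only [Set.mem_insert_iff, Set.mem_singleton_iff]
          push_neg
          refine ⟨?_, (hune i).2⟩
          intro he
          have he2 := huinj he
          have h1 : ((1 : ℕ) : ZMod m) = 0 := by push_cast; linear_combination -he2
          exact hUne0 (by omega) (by omega) h1)
        (by
          simp only [Set.mem_insert_iff, Set.mem_singleton_iff]
          push_neg
          exact ⟨Ne.symm (hune (i + 1)).1, hxy⟩)
      obtain ⟨c, hcc⟩ := rtg_first hsc (hune i).1
      obtain ⟨-, hcS, hrc⟩ := hcc
      simp only [Set.mem_insert_iff, Set.mem_singleton_iff] at hcS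
      push_neg at hcS
      have hcnx : c ≠ x := fun he => hnx (he ▸ hrc)
      obtain ⟨kk, rfl⟩ := hucov c hcnx hcS.2
      have hkk : u kk = u (i + (((kk - i).val : ℕ) : ZMod m)) := by
        rw [hval_id]
        congr 1
        ring
      have hs0 : (kk - i).val ≠ 0 := by
        intro he
        have : kk = i := by
          have h0 : kk - i = 0 := by
            have := hval_id (kk - i)
            rw [he] at this
            simpa using this.symm
          have := sub_eq_zero.mp h0
          exact this
        rw [this] at hrc
        exact hIrr _ hrc
      have hs1 : (kk - i).val ≠ 1 := by
        intro he
        apply hcS.1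
        congr 1
        have h0 : kk - i = 1 := by
          have := hval_id (kk - i)
          rw [he] at this
          simpa using this.symm
        have : kk = i + 1 := by
          rw [← h0]; ring
        exact this
      rw [hkk] at hrc
      exact hno _ (by omega) (by have := ZMod.val_lt (kk - i); omega) hrc
    · have hz : r (u i) x := houtx i hiB
      have hny : ¬ r (u i) y := asym hiB
      have hsc := hS {u (i + 1), x} (by rw [Set.ncard_pair (hune (i + 1)).1]; omega)
        (u i) y
        (by
          simp only [Set.mem_insert_iff, Set.mem_singleton_iff]
          push_neg
          refine ⟨?_, (hune i).1⟩
          intro he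
          have he2 := huinj he
          have h1 : ((1 : ℕ) : ZMod m) = 0 := by push_cast; linear_combination -he2
          exact hUne0 (by omega) (by omega) h1)
        (by
          simp only [Set.mem_insert_iff, Set.mem_singleton_iff]
          push_neg
          exact ⟨Ne.symm (hune (i + 1)).2, Ne.symm hxy⟩)
      obtain ⟨c, hcc⟩ := rtg_first hsc (hune i).2
      obtain ⟨-, hcS, hrc⟩ := hcc
      simp only [Set.mem_insert_iff, Set.mem_singleton_iff] at hcS
      push_neg at hcS
      have hcny : c ≠ y := fun he => hny (he ▸ hrc)
      obtain ⟨kk, rfl⟩ := hucov c hcS.2 hcny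
      have hkk : u kk = u (i + (((kk - i).val : ℕ) : ZMod m)) := by
        rw [hval_id]
        congr 1
        ring
      have hs0 : (kk - i).val ≠ 0 := by
        intro he
        have : kk = i := by
          have h0 : kk - i = 0 := by
            have := hval_id (kk - i)
            rw [he] at this
            simpa using this.symm
          exact sub_eq_zero.mp h0
        rw [this] at hrc
        exact hIrr _ hrc
      have hs1 : (kk - i).val ≠ 1 := by
        intro he
        apply hcS.1
        congr 1
        have h0 : kk - i = 1 := by
          have := hval_id (kk - i)
          rw [he] at this
          simpa using this.symm
        rw [← h0]; ring
      rw [hkk] at hrc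
      exact hno _ (by omega) (by have := ZMod.val_lt (kk - i); omega) hrc
  have hm6 : 6 ≤ m := by
    rcases (show m = 2 ∨ m = 3 ∨ m = 4 ∨ m = 5 ∨ 6 ≤ m by omega) with h | h | h | h | h
    · subst h
      have h1 := hg2 0
      rw [show ((0 : ZMod 2) + 2) = 0 by decide] at h1
      exact absurd h1 (hIrr _)
    · omega
    · subst h
      have h1 := hg2 0
      have h2 := hg2 2
      rw [show ((0 : ZMod 4) + 2) = 2 by decide] at h1
      rw [show ((2 : ZMod 4) + 2) = 0 by decide] at h2
      exact absurd h2 (asym h1)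
    · omega
    · exact h
  have hg3 : ∃ j : ZMod m, r (u j) (u (j + 3)) := by
    by_contra hn
    push_neg at hn
    have hne03 : u (0 : ZMod m) ≠ u (3 : ZMod m) := by
      intro he
      have he2 := huinj he
      have h3 : ((3 : ℕ) : ZMod m) = 0 := by push_cast; linear_combination -he2
      exact hUne0 (by omega) (by omega) h3
    by_cases hr : r (u (0 : ZMod m)) (u (3 : ZMod m))
    · apply hn 0
      rwa [show ((0 : ZMod m) + 3) = 3 by ring]
    · have hr2 : r (u (3 : ZMod m)) (u (0 : ZMod m)) := tot (Ne.symm hne03) hr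
      have e : (3 : ZMod m) + ((m - 3 : ℕ) : ZMod m) = 0 := by
        rw [hnegcast (by omega)]
        push_cast
        ring
      rw [show (u (0 : ZMod m)) = u ((3 : ZMod m) + ((m - 3 : ℕ) : ZMod m)) by rw [e]] at hr2
      have h := hgall 3 (m - 3) (by omega) (by omega) hr2 3 (by omega) (by omega)
      apply hn 3
      have e2 : (3 : ZMod m) + ((3 : ℕ) : ZMod m) = 3 + 3 := by push_cast; ring
      rwa [e2] at h
  obtain ⟨j, hj3⟩ := hg3
  have hos_nd : ([m-2, m-1] ++ (List.range' 1 (m-3) ++ [0])).Nodup := by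
    rw [List.nodup_append, List.nodup_append]
    refine ⟨?_, ⟨List.nodup_range', List.nodup_singleton _, ?_⟩, ?_⟩
    · simp only [List.nodup_cons, List.mem_singleton, List.nodup_singleton, and_true,
        List.not_mem_nil, not_false_iff]
      refine ⟨by omega, trivial, List.nodup_nil⟩
    · intro o ho o2 ho2 hoo; subst hoo
      rw [List.mem_range'_1] at ho
      simp only [List.mem_singleton] at ho2
      omega
    · intro o ho o2 ho2 hoo; subst hoo
      simp only [List.mem_cons, List.mem_singleton, List.not_mem_nil, or_false] at ho
      rcases List.mem_append.mp ho2 with h | h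
      · rw [List.mem_range'_1] at h
        omega
      · simp only [List.mem_singleton] at h
        omega
  have hos_lt : ∀ o ∈ [m-2, m-1] ++ (List.range' 1 (m-3) ++ [0]), o < m := by
    intro o ho
    rcases List.mem_append.mp ho with h | h
    · simp only [List.mem_cons, List.mem_singleton, List.not_mem_nil, or_false] at h
      omega
    · rcases List.mem_append.mp h with h | h
      · rw [List.mem_range'_1] at h
        omega
      · simp only [List.mem_singleton] at h
        omega
  have hos_len : ([m-2, m-1] ++ (List.range' 1 (m-3) ++ [0])).length = m := by
    simp only [List.length_append, List.length_cons, List.length_range',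
      List.length_singleton, List.length_nil]
    omega
  set i : ZMod m := j + 3 with hidef
  have hos_ch : ([m-2, m-1] ++ (List.range' 1 (m-3) ++ [0])).Chain'
      (fun o o' : ℕ => r (u (i + (o : ZMod m))) (u (i + (o' : ZMod m)))) := by
    rw [List.Chain', List.isChain_append]
    refine ⟨?_, ?_, ?_⟩
    · rw [List.isChain_pair]
      have e : ((m - 1 : ℕ) : ZMod m) = ((m - 2 : ℕ) : ZMod m) + 1 := by
        rw [show (m - 1 : ℕ) = (m - 2) + 1 from by omega]
        push_cast
        ring
      rw [e, ← add_assoc]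
      exact huedge _
    · rw [List.isChain_append]
      refine ⟨chain'_range' _ _ (fun k => ?_), List.isChain_singleton _, ?_⟩
      · have e : ((k + 1 : ℕ) : ZMod m) = (k : ZMod m) + 1 := by push_cast; ring
        rw [e, ← add_assoc]
        exact huedge _
      · intro p hp q hq
        rw [range'_getLast? _ (by omega)] at hp
        simp only [List.head?_cons, Option.mem_def, Option.some.injEq] at hp hq
        subst hp; subst hq
        have e1 : i + ((1 + (m - 3) - 1 : ℕ) : ZMod m) = j := by
          rw [show (1 + (m - 3) - 1 : ℕ) = m - 3 from by omega, hnegcast (by omega), hidef]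
          push_cast
          ring
        have e2 : i + ((0 : ℕ) : ZMod m) = j + 3 := by
          rw [hidef]
          push_cast
          ring
        rw [e1, e2]
        exact hj3
    · intro p hp q hq
      simp only [List.getLast?_cons_cons, List.getLast?_singleton, Option.mem_def,
        Option.some.injEq] at hp
      rw [List.head?_append, range'_head? _ (by omega)] at hq
      simp only [Option.or_some, Option.some_or, Option.mem_def, Option.some.injEq] at hq
      subst hp; subst hq
      have e1 : i + ((1 : ℕ) : ZMod m) = (i + ((m - 1 : ℕ) : ZMod m)) + 2 := by
        rw [hnegcast (by omega)]
        push_cast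
        ring
      rw [e1]
      exact hg2 _
  have hhd' : ([m-2, m-1] ++ (List.range' 1 (m-3) ++ [0])).head? = some (m-2) := rfl
  have hla' : ([m-2, m-1] ++ (List.range' 1 (m-3) ++ [0])).getLast? = some 0 := by
    rw [show [m-2, m-1] ++ (List.range' 1 (m-3) ++ [0])
        = ([m-2, m-1] ++ List.range' 1 (m-3)) ++ [0] from (List.append_assoc _ _ _).symm,
      List.getLast?_concat]
  have hstart : i + ((m - 2 : ℕ) : ZMod m) = i - 2 := by
    rw [hnegcast (by omega)]
    push_cast
    ring
  have hend0 : i + ((0 : ℕ) : ZMod m) = i := by push_cast; ring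
  rcases hABall i with hiA | hiB
  · apply build_path r hIrr x y hxy m hm u huinj hune hucov x y (Or.inl ⟨rfl, rfl⟩) i
      _ hos_nd hos_lt hos_len hos_ch
    · intro o ho
      rw [hhd'] at ho
      simp only [Option.mem_def, Option.some.injEq] at ho
      subst ho
      rw [hstart]
      exact hAA i hiA
    · intro o ho
      rw [hla'] at ho
      simp only [Option.mem_def, Option.some.injEq] at ho
      subst ho
      rw [hend0]
      exact houty i hiA
  · apply build_path r hIrr x y hxy m hm u huinj hune hucov y x (Or.inr ⟨rfl, rfl⟩) i
      _ hos_nd hos_lt hos_len hos_ch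
    · intro o ho
      rw [hhd'] at ho
      simp only [Option.mem_def, Option.some.injEq] at ho
      subst ho
      rw [hstart]
      exact hBB i hiB
    · intro o ho
      rw [hla'] at ho
      simp only [Option.mem_def, Option.some.injEq] at ho
      subst ho
      rw [hend0]
      exact houtx i hiB




end MainAux

section Glue
variable {V : Type*}

lemma rtg_sub {α : Type*} {r : α → α → Prop} {P : α → Prop} :
    ∀ {a b : α}, Relation.ReflTransGen (fun u v => P u ∧ P v ∧ r u v) a b →
      ∀ (ha : P a) (hb : P b),
      Relation.ReflTransGen (fun (u v : {z // P z}) => r u.1 v.1) ⟨a, ha⟩ ⟨b, hb⟩ := by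
  intro a b h
  induction h with
  | refl => intro ha hb; exact Relation.ReflTransGen.refl
  | @tail b' c hab hbc ih =>
    intro ha hc
    exact (ih ha hbc.1).tail hbc.2.2

theorem stmt1' [Fintype V] (r : V → V → Prop) (hT : IsTournament r)
    (h3 : KStrong r 3) (x y : V) (hxy : x ≠ y) :
    ∃ p : List V, IsHamDipath r x y p ∨ IsHamDipath r y x p := by
  classical
  have hIrr := hT.1
  have hTiff := hT.2
  have hcV := h3.1
  have hS := h3.2
  have hWIrr : ∀ w : {v : V // v ≠ x ∧ v ≠ y},
      ¬ (fun a b : {v : V // v ≠ x ∧ v ≠ y} => r a.1 b.1) w w := fun w => hIrr w.1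
  have hWT : ∀ a b : {v : V // v ≠ x ∧ v ≠ y}, a ≠ b →
      (r a.1 b.1 ↔ ¬ r b.1 a.1) := by
    intro a b hab
    exact hTiff a.1 b.1 (fun he => hab (Subtype.ext he))
  have hWstrong : ∀ a b : {v : V // v ≠ x ∧ v ≠ y},
      Relation.ReflTransGen (fun a b : {v : V // v ≠ x ∧ v ≠ y} => r a.1 b.1) a b := by
    intro a b
    have h := hS {x, y} (by rw [Set.ncard_pair hxy]; omega) a.1 b.1
      (by simp only [Set.mem_insert_iff, Set.mem_singleton_iff]; push_neg;
          exact ⟨a.2.1, a.2.2⟩)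
      (by simp only [Set.mem_insert_iff, Set.mem_singleton_iff]; push_neg;
          exact ⟨b.2.1, b.2.2⟩)
    have h2 : Relation.ReflTransGen
        (fun u v => (u ≠ x ∧ u ≠ y) ∧ (v ≠ x ∧ v ≠ y) ∧ r u v) a.1 b.1 := by
      refine Relation.ReflTransGen.mono ?_ _ _ h
      intro p q hpq
      obtain ⟨hp, hq, hr⟩ := hpq
      simp only [Set.mem_insert_iff, Set.mem_singleton_iff] at hp hq
      push_neg at hp hq
      exact ⟨hp, hq, hr⟩
    have h3' := rtg_sub h2 a.2 b.2
    convert h3' <;> exact Subtype.ext rfl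
  have hcardW : Fintype.card {v : V // v ≠ x ∧ v ≠ y} + 2 = Fintype.card V := by
    rw [Fintype.card_subtype]
    have he : Finset.univ.filter (fun v : V => v ≠ x ∧ v ≠ y) = Finset.univ \ {x, y} := by
      ext v
      simp only [Finset.mem_filter, Finset.mem_univ, true_and, Finset.mem_sdiff,
        Finset.mem_insert, Finset.mem_singleton]
      tauto
    rw [he, Finset.card_sdiff_of_subset (Finset.subset_univ _), Finset.card_pair hxy, Finset.card_univ]
    omega
  obtain ⟨l, hch, hnd, hall, hwrap⟩ := camion hWIrr hWT hWstrong (by omega)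
  have hlen : l.length = Fintype.card {v : V // v ≠ x ∧ v ≠ y} := by
    have h1 : l.toFinset.card = l.length := List.toFinset_card_of_nodup hnd
    have h2 : l.toFinset = Finset.univ :=
      Finset.eq_univ_iff_forall.mpr (fun w => List.mem_toFinset.mpr (hall w))
    rw [h2, Finset.card_univ] at h1
    omega
  set m := Fintype.card {v : V // v ≠ x ∧ v ≠ y} with hmdef
  have hm2 : 2 ≤ m := by omega
  haveI : NeZero m := ⟨by omega⟩
  have hilt : ∀ i : ZMod m, i.val < l.length := by
    intro i
    rw [hlen]
    exact ZMod.val_lt i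
  set u : ZMod m → V := fun i => (l.get ⟨i.val, hilt i⟩).1 with hu
  have hlpos : 0 < l.length := by omega
  have huinj : Function.Injective u := by
    intro i j hij
    have h1 : l.get ⟨i.val, hilt i⟩ = l.get ⟨j.val, hilt j⟩ := Subtype.ext hij
    have h2 := (List.Nodup.get_inj_iff hnd).mp h1
    have h3 : i.val = j.val := congrArg Fin.val h2
    exact ZMod.val_injective _ h3
  have hune : ∀ i, u i ≠ x ∧ u i ≠ y := fun i => (l.get ⟨i.val, hilt i⟩).2
  have hucov : ∀ v : V, v ≠ x → v ≠ y → ∃ i, u i = v := by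
    intro v hvx hvy
    obtain ⟨n, hn⟩ := List.mem_iff_get.mp (hall ⟨v, hvx, hvy⟩)
    refine ⟨((n.val : ℕ) : ZMod m), ?_⟩
    have hnv : ((n.val : ℕ) : ZMod m).val = n.val := by
      apply ZMod.val_cast_of_lt
      rw [← hlen]
      exact n.isLt
    have e : (⟨((n.val : ℕ) : ZMod m).val, hilt _⟩ : Fin l.length) = n := Fin.ext hnv
    rw [hu]
    simp only
    rw [e, hn]
  have hval1 : (1 : ZMod m).val = 1 := by
    have : ((1 : ℕ) : ZMod m).val = 1 := ZMod.val_cast_of_lt (by omega)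
    simpa using this
  have huedge : ∀ i : ZMod m, r (u i) (u (i + 1)) := by
    intro i
    have hv1 : (i + 1).val = (i.val + 1) % m := by
      rw [ZMod.val_add, hval1]
    by_cases hlast : i.val = m - 1
    · have h0 : (i + 1).val = 0 := by
        rw [hv1, hlast, show m - 1 + 1 = m from by omega, Nat.mod_self]
      have e1 : (⟨i.val, hilt i⟩ : Fin l.length) = ⟨l.length - 1, by omega⟩ := by
        apply Fin.ext
        simp only
        omega
      have e2 : (⟨(i + 1).val, hilt (i + 1)⟩ : Fin l.length) = ⟨0, hlpos⟩ :=
        Fin.ext (by simp only [h0])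
      show r (l.get ⟨i.val, hilt i⟩).1 (l.get ⟨(i + 1).val, hilt (i + 1)⟩).1
      rw [e1, e2]
      refine hwrap _ ?_ _ ?_
      · rw [getLast?_eq_get' hlpos]
        rfl
      · rw [head?_eq_get hlpos]
        rfl
    · have hiv := ZMod.val_lt i
      have h1 : (i + 1).val = i.val + 1 := by
        rw [hv1, Nat.mod_eq_of_lt (by omega)]
      have hchain := List.isChain_iff_getElem.mp hch i.val (by omega)
      show r (l.get ⟨i.val, hilt i⟩).1 (l.get ⟨(i + 1).val, hilt (i + 1)⟩).1
      have e2 : (⟨(i + 1).val, hilt (i + 1)⟩ : Fin l.length) = ⟨i.val + 1, by omega⟩ :=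
        Fin.ext h1
      rw [e2]
      exact hchain
  exact main_aux r hT h3 x y hxy m hm2 u huinj hune hucov huedge

end Glue

/-- Every 3-strong tournament is 1*-weakly connected. -/
theorem stmt1 [Fintype V] (r : V → V → Prop) (hT : IsTournament r)
    (h3 : KStrong r 3) (x y : V) (hxy : x ≠ y) :
    ∃ p : List V, IsHamDipath r x y p ∨ IsHamDipath r y x p :=
  stmt1' r hT h3 x y hxy
end

section
/- Every strongly connected tournament is 2*-weakly connected; that is, for every pair of distinct vertices x, y of a strongly connected tournament T, there exist two internally disjoint directed paths between x and y (each directed from x to y or from y to x) whose union contains every vertex of T. -/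
variable {V : Type*}

/-- Cyclic list: chain plus arc from last to head. -/
def IsCyc (r : V → V → Prop) (p : List V) : Prop :=
  p.Chain' r ∧ p.Nodup ∧ ∀ a ∈ p.getLast?, ∀ b ∈ p.head?, r a b

lemma closed_reach {r : V → V → Prop} {S : V → Prop}
    (hS : ∀ u w, S u → r u w → S w) {u w : V}
    (h : Relation.ReflTransGen r u w) (hu : S u) : S w := by
  induction h with
  | refl => exact hu
  | tail _ hr ih => exact hS _ _ ih hr

lemma exists_nodup_path {r : V → V → Prop} {a b : V}
    (h : Relation.ReflTransGen r a b) :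
    ∃ p : List V, p.Chain' r ∧ p.Nodup ∧ p.head? = some a ∧ p.getLast? = some b := by
  induction h using Relation.ReflTransGen.head_induction_on with
  | refl => exact ⟨[b], List.isChain_singleton b, by simp, by simp, by simp⟩
  | head hr _ ih =>
    rename_i u c _
    obtain ⟨p, hc, hn, hh, hl⟩ := ih
    by_cases hmem : u ∈ p
    · obtain ⟨s, t, rfl⟩ := List.append_of_mem hmem
      refine ⟨u :: t, hc.suffix ⟨s, rfl⟩, ?_, rfl, ?_⟩
      · exact hn.sublist (List.sublist_append_right s (u :: t))
      · rwa [List.getLast?_append_of_ne_nil _ (by simp)] at hl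
    · refine ⟨u :: p, ?_, hn.cons hmem, rfl, ?_⟩
      · cases p with
        | nil => exact List.isChain_singleton u
        | cons h t => simp only [List.head?_cons, Option.some.injEq] at hh; subst hh
                      exact hc.cons_cons hr
      · cases p with
        | nil => simp at hh
        | cons h t => simpa using hl

lemma isCyc_rotate_one {r : V → V → Prop} {p : List V} (h : IsCyc r p) :
    IsCyc r (p.rotate 1) := by
  obtain ⟨hc, hn, hcyc⟩ := h
  cases p with
  | nil => simpa [IsCyc] using (⟨hc, hn, hcyc⟩ : IsCyc r [])
  | cons a l =>
    rw [List.rotate_cons_succ, List.rotate_zero]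
    cases l with
    | nil => simp only [List.nil_append]; exact ⟨hc, hn, hcyc⟩
    | cons b t =>
      refine ⟨?_, ?_, ?_⟩
      · refine List.isChain_append.2 ?_
        refine ⟨(List.isChain_cons_cons.1 hc).2, List.isChain_singleton a, ?_⟩
        intro x hx y hy
        simp at hy; subst hy
        exact hcyc x (by simpa [List.getLast?_cons_cons] using hx) a rfl
      · simpa [List.nodup_append, List.nodup_cons] using by
          have := hn; simp [List.nodup_cons] at this ⊢; exact ⟨⟨this.2.1, fun h => this.1.1 h.symm⟩, this.2.2, fun c hc hca => this.1.2 (hca ▸ hc)⟩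
      · intro u hu v hv
        rw [List.getLast?_append_of_ne_nil _ (by simp)] at hu
        simp at hu; subst hu
        rw [List.head?_append_of_ne_nil _ (by simp)] at hv
        simp at hv; subst hv
        exact (List.isChain_cons_cons.1 hc).1

lemma isCyc_rotate {r : V → V → Prop} {p : List V} (h : IsCyc r p) (n : ℕ) :
    IsCyc r (p.rotate n) := by
  induction n with
  | zero => simpa
  | succ k ih =>
    have := isCyc_rotate_one ih
    rwa [List.rotate_rotate] at this

lemma exists_rotation_head {p : List V} {v : V} (hv : v ∈ p) :
    ∃ n, (p.rotate n).head? = some v := by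
  obtain ⟨n, hn, hget⟩ := List.getElem_of_mem hv
  exact ⟨n, by rw [List.head?_rotate hn]; simp [hget, List.getElem?_eq_getElem hn]⟩

lemma head_dropWhile_not {α : Type*} (p : α → Bool) :
    ∀ (l : List α) {c : α} {d : List α}, l.dropWhile p = c :: d → ¬ p c
  | [], c, d, h => by simp at h
  | a :: l, c, d, h => by
    by_cases hp : p a
    · rw [List.dropWhile_cons_of_pos hp] at h
      exact head_dropWhile_not p l h
    · rw [List.dropWhile_cons_of_neg hp] at h
      cases h; exact hp

open Classical in
lemma insert_cyc {r : V → V → Prop} (hT : IsTournament r) {p : List V} {v : V}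
    (h : IsCyc r p) (hv : v ∉ p) (ha : ∃ a ∈ p, r a v) (hb : ∃ b ∈ p, r v b) :
    ∃ q, IsCyc r q ∧ q.length = p.length + 1 ∧ ∀ w, w ∈ q ↔ w ∈ p ∨ w = v := by
  obtain ⟨a, hap, hav⟩ := ha
  obtain ⟨n, hn⟩ := exists_rotation_head hap
  set q := p.rotate n with hqdef
  have hq : IsCyc r q := isCyc_rotate h n
  have hmemq : ∀ w, w ∈ q ↔ w ∈ p := fun w => List.mem_rotate
  have hvq : v ∉ q := fun hc => hv ((hmemq v).1 hc)
  set P : V → Bool := fun w => decide (r w v) with hP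
  have hPiff : ∀ w, P w = true ↔ r w v := by intro w; simp [hP]
  set t := q.takeWhile P with ht
  set d := q.dropWhile P with hd
  have htd : t ++ d = q := by rw [ht, hd]; exact List.takeWhile_append_dropWhile
  -- t is nonempty
  have htne : t ≠ [] := by
    cases hql : q with
    | nil => rw [hql] at hn; simp at hn
    | cons c tl =>
      rw [hql] at hn; simp at hn; subst hn
      rw [ht, hql, List.takeWhile_cons_of_pos (by simp [hP, hav])]
      simp
  -- d is nonempty
  have hdne : d ≠ [] := by
    intro hnil
    rw [hd, List.dropWhile_eq_nil_iff] at hnil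
    obtain ⟨b, hbp, hvb⟩ := hb
    have hbq : b ∈ q := (hmemq b).2 hbp
    have hbv : r b v := (hPiff b).1 (hnil b hbq)
    have hne : v ≠ b := fun hh => hv (hh ▸ hbp)
    exact ((hT.2 v b hne).1 hvb) hbv
  have hct : t.Chain' r := hq.1.prefix (by rw [ht]; exact List.takeWhile_prefix _)
  have hcd : d.Chain' r := hq.1.suffix ⟨t, htd⟩
  -- head of d is beaten by v
  have hvd : ∀ y ∈ d.head?, r v y := by
    intro y hy
    cases hdl : d with
    | nil => simp [hdl] at hy
    | cons c d' =>
      have hcy : c = y := by rw [hdl] at hy; simpa using hy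
      have hnP : ¬ P c = true := head_dropWhile_not P q (hd ▸ hdl)
      have hyq : y ∈ q := by
        have : y ∈ d := by simp [hdl, ← hcy]
        exact htd ▸ List.mem_append_right t this
      have hne : v ≠ y := fun hh => hvq (hh ▸ hyq)
      exact (hT.2 v y hne).2 (fun hc => hnP ((hPiff c).2 (hcy ▸ hc)))
  refine ⟨t ++ v :: d, ⟨?_, ?_, ?_⟩, ?_, ?_⟩
  · refine List.isChain_append.2 ⟨hct, List.isChain_cons.2 ⟨hvd, hcd⟩, ?_⟩
    intro x hx y hy
    simp at hy; subst hy
    have hxt : x ∈ t := by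
      obtain ⟨_, hh⟩ := List.mem_getLast?_eq_getLast hx
      exact hh ▸ List.getLast_mem _
    exact (hPiff x).1 (List.mem_takeWhile_imp (ht ▸ hxt))
  · have hperm : (t ++ v :: d).Perm (v :: q) := htd ▸ List.perm_middle
    exact hperm.nodup_iff.2 (List.nodup_cons.2 ⟨hvq, hq.2.1⟩)
  · intro x hx y hy
    rw [List.getLast?_append_of_ne_nil _ (by simp)] at hx
    have : (v :: d).getLast? = d.getLast? := by
      rw [show v :: d = [v] ++ d by simp, List.getLast?_append_of_ne_nil _ hdne]
    rw [this, ← List.getLast?_append_of_ne_nil t hdne, htd] at hx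
    rw [List.head?_append_of_ne_nil _ htne, ← List.head?_append_of_ne_nil t (l₂ := d) htne, htd] at hy
    exact hq.2.2 x hx y hy
  · have hperm : (t ++ v :: d).Perm (v :: q) := htd ▸ List.perm_middle
    rw [hperm.length_eq]
    simp [hqdef]
  · intro w
    have hperm : (t ++ v :: d).Perm (v :: q) := htd ▸ List.perm_middle
    rw [hperm.mem_iff]
    simp [hmemq w]
    tauto

lemma extend_cyc_two {r : V → V → Prop} (hT : IsTournament r) {p : List V} {a b : V}
    (h : IsCyc r p) (hp : p ≠ []) (ha : a ∉ p) (hb : b ∉ p)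
    (haA : ∀ c ∈ p, r a c) (hbB : ∀ c ∈ p, r c b) (hba : r b a) :
    ∃ q, IsCyc r q ∧ p.length < q.length := by
  have hab : b ≠ a := fun hh => hT.1 a (hh ▸ hba)
  cases p with
  | nil => exact absurd rfl hp
  | cons c0 cs =>
    refine ⟨c0 :: b :: a :: cs, ⟨?_, ?_, ?_⟩, by simp⟩
    · refine List.isChain_cons_cons.2 ⟨hbB c0 (by simp), List.isChain_cons_cons.2 ⟨hba, ?_⟩⟩
      refine List.isChain_cons.2 ⟨?_, h.1.tail⟩
      intro y hy
      have : y ∈ cs := by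
        cases cs with
        | nil => simp at hy
        | cons c1 cs' => simp at hy; simp [hy]
      exact haA y (by simp [this])
    · have hn := h.2.1
      simp only [List.nodup_cons, List.mem_cons] at hn ⊢
      simp only [List.mem_cons] at ha hb
      push_neg at ha hb
      refine ⟨?_, ?_, ha.2, hn.2⟩
      · rintro (rfl | rfl | hcc)
        · exact hb.1 rfl
        · exact ha.1 rfl
        · exact hn.1 hcc
      · rintro (rfl | hcc)
        · exact hab rfl
        · exact hb.2 hcc
    · intro u hu w hw
      simp only [List.head?_cons, Option.mem_def, Option.some.injEq] at hw
      subst hw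
      cases cs with
      | nil =>
        simp at hu; subst hu
        exact haA c0 (by simp)
      | cons c1 cs' =>
        have h1 : (c0 :: b :: a :: c1 :: cs').getLast? = (c1 :: cs').getLast? := by
          rw [show c0 :: b :: a :: c1 :: cs' = [c0, b, a] ++ (c1 :: cs') from rfl,
            List.getLast?_append_of_ne_nil _ (by simp)]
        have h2 : (c0 :: c1 :: cs').getLast? = (c1 :: cs').getLast? := by
          rw [show c0 :: c1 :: cs' = [c0] ++ (c1 :: cs') from rfl,
            List.getLast?_append_of_ne_nil _ (by simp)]
        rw [h1, ← h2] at hu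
        exact h.2.2 u hu c0 rfl

lemma extend_cyc_s5 {r : V → V → Prop} (hT : IsTournament r) (hstrong : StronglyConnected r)
    {p : List V} (h : IsCyc r p) (hp : p ≠ []) {v : V} (hv : v ∉ p) :
    ∃ q, IsCyc r q ∧ p.length < q.length := by
  by_cases hcase : ∀ u, u ∉ p → (∀ c ∈ p, r u c) ∨ (∀ c ∈ p, r c u)
  · have hc0 : p.head hp ∈ p := List.head_mem hp
    set c0 := p.head hp with hc0def
    -- some vertex outside is dominated by all of p
    have hBne : ∃ b, b ∉ p ∧ ∀ c ∈ p, r c b := by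
      by_contra hno
      push_neg at hno
      have hclosed : ∀ s t, s ∈ p → r s t → t ∈ p := by
        intro s t hs hst
        by_contra htp
        rcases hcase t htp with hA | hB
        · have hst' : s ≠ t := fun hh => hT.1 s (hh ▸ hst)
          exact (hT.2 s t hst').1 hst (hA s hs)
        · obtain ⟨c, hc, hcn⟩ := hno t htp
          exact hcn (hB c hc)
      exact hv (closed_reach hclosed (hstrong c0 v) hc0)
    obtain ⟨b, hbp, hbB⟩ := hBne
    have hkey : ∃ b' a, (b' ∉ p ∧ ∀ c ∈ p, r c b') ∧ (a ∉ p ∧ ∀ c ∈ p, r a c) ∧ r b' a := by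
      by_contra hno
      push_neg at hno
      have hclosed : ∀ s t, (s ∉ p ∧ ∀ c ∈ p, r c s) → r s t → (t ∉ p ∧ ∀ c ∈ p, r c t) := by
        intro s t hs hst
        have hstne : s ≠ t := fun hh => hT.1 s (hh ▸ hst)
        have htp : t ∉ p := by
          intro htp
          exact (hT.2 s t hstne).1 hst (hs.2 t htp)
        rcases hcase t htp with hA | hB
        · exact absurd hst (hno s t hs ⟨htp, hA⟩)
        · exact ⟨htp, hB⟩
      have := closed_reach hclosed (hstrong b c0) ⟨hbp, hbB⟩
      exact this.1 hc0
    obtain ⟨b', a, hB', hA', hba⟩ := hkey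
    exact extend_cyc_two hT h hp hA'.1 hB'.1 hA'.2 hB'.2 hba
  · push_neg at hcase
    obtain ⟨u, hup, h1, h2⟩ := hcase
    obtain ⟨c1, hc1, hc1n⟩ := h1
    obtain ⟨c2, hc2, hc2n⟩ := h2
    have hu1 : u ≠ c1 := fun hh => hup (hh ▸ hc1)
    have hu2 : c2 ≠ u := fun hh => hup (hh ▸ hc2)
    have ha : r c1 u := by
      by_contra hc
      exact hc1n ((hT.2 u c1 hu1).2 hc)
    have hb : r u c2 := by
      by_contra hc
      exact hc ((hT.2 u c2 (Ne.symm hu2)).2 hc2n)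
    obtain ⟨q, hq, hlen, _⟩ := insert_cyc hT h hup ⟨c1, hc1, ha⟩ ⟨c2, hc2, hb⟩
    exact ⟨q, hq, by omega⟩

lemma exists_ham_cyc [Fintype V] {r : V → V → Prop} (hT : IsTournament r)
    (hstrong : StronglyConnected r) {p : List V} (h : IsCyc r p) (hp : p ≠ []) :
    ∃ q, IsCyc r q ∧ q ≠ [] ∧ ∀ w, w ∈ q := by
  suffices H : ∀ n (p : List V), IsCyc r p → p ≠ [] →
      Fintype.card V - p.length ≤ n → ∃ q, IsCyc r q ∧ q ≠ [] ∧ ∀ w, w ∈ q by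
    exact H _ p h hp le_rfl
  intro n
  induction n with
  | zero =>
    intro p h hp hle
    by_cases hall : ∀ w, w ∈ p
    · exact ⟨p, h, hp, hall⟩
    · push_neg at hall
      obtain ⟨v, hv⟩ := hall
      obtain ⟨q, hq, hlen⟩ := extend_cyc_s5 hT hstrong h hp hv
      have h1 : q.length ≤ Fintype.card V := hq.2.1.length_le_card
      have h2 : p.length ≤ Fintype.card V := h.2.1.length_le_card
      omega
  | succ k ih =>
    intro p h hp hle
    by_cases hall : ∀ w, w ∈ p
    · exact ⟨p, h, hp, hall⟩
    · push_neg at hall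
      obtain ⟨v, hv⟩ := hall
      obtain ⟨q, hq, hlen⟩ := extend_cyc_s5 hT hstrong h hp hv
      refine ih q hq (by rw [← List.length_pos_iff_ne_nil]; omega) (by omega)

/-- Every strongly connected tournament is 2*-weakly connected. -/
theorem stmt5 [Fintype V] (r : V → V → Prop) (hT : IsTournament r)
    (hstrong : StronglyConnected r) (x y : V) (hxy : x ≠ y) :
    WeakStarContainer r x y 2 := by
  have hbase : ∃ p, IsCyc r p ∧ p ≠ [] := by
    by_cases hr : r x y
    · obtain ⟨p, hc, hn, hh, hl⟩ := exists_nodup_path (hstrong y x)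
      refine ⟨p, ⟨hc, hn, ?_⟩, fun hnil => by simp [hnil] at hh⟩
      intro u hu w hw
      rw [hl] at hu; rw [hh] at hw
      simp at hu hw; subst hu; subst hw; exact hr
    · have hr' : r y x := (hT.2 y x (Ne.symm hxy)).2 hr
      obtain ⟨p, hc, hn, hh, hl⟩ := exists_nodup_path (hstrong x y)
      refine ⟨p, ⟨hc, hn, ?_⟩, fun hnil => by simp [hnil] at hh⟩
      intro u hu w hw
      rw [hl] at hu; rw [hh] at hw
      simp at hu hw; subst hu; subst hw; exact hr'
  obtain ⟨p0, hp0, hp0ne⟩ := hbase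
  obtain ⟨q0, hq0, hq0ne, hq0all⟩ := exists_ham_cyc hT hstrong hp0 hp0ne
  obtain ⟨n, hn⟩ := exists_rotation_head (hq0all x)
  set q := q0.rotate n with hqdef
  have hq : IsCyc r q := isCyc_rotate hq0 n
  have hqall : ∀ w, w ∈ q := fun w => List.mem_rotate.2 (hq0all w)
  obtain ⟨rest, hrest⟩ : ∃ rest, q = x :: rest := by
    cases hql : q with
    | nil => rw [hql] at hn; simp at hn
    | cons c tl => rw [hql] at hn; simp at hn; exact ⟨tl, by rw [hn]⟩
  have hy : y ∈ rest := by
    have := hqall y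
    rw [hrest] at this
    rcases List.mem_cons.1 this with hh | hh
    · exact absurd hh (Ne.symm hxy)
    · exact hh
  obtain ⟨a, b, hab⟩ := List.append_of_mem hy
  have hqeq : q = (x :: a) ++ (y :: b) := by rw [hrest, hab]; rfl
  have hc : ((x :: a) ++ (y :: b)).Chain' r := hqeq ▸ hq.1
  have hn' : ((x :: a) ++ (y :: b)).Nodup := hqeq ▸ hq.2.1
  obtain ⟨c1, c2, c3⟩ := List.isChain_append.1 hc
  set P0 : List V := (x :: a) ++ [y] with hP0
  set P1 : List V := (y :: b) ++ [x] with hP1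
  have hd0 : IsDipath r x y P0 := by
    refine ⟨List.isChain_append.2 ⟨c1, List.isChain_singleton y, ?_⟩, ?_, ?_, ?_⟩
    · intro l hl w hw
      simp at hw; subst hw
      exact c3 l hl y rfl
    · refine hn'.sublist (List.Sublist.append_left ?_ (x :: a))
      exact (List.nil_sublist b).cons₂ y
    · rw [hP0, List.head?_append_of_ne_nil _ (by simp)]; rfl
    · rw [hP0, List.getLast?_concat]
  have hd1 : IsDipath r y x P1 := by
    refine ⟨List.isChain_append.2 ⟨c2, List.isChain_singleton x, ?_⟩, ?_, ?_, ?_⟩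
    · intro l hl w hw
      simp at hw; subst hw
      have hlq : l ∈ q.getLast? := by
        rw [hqeq, List.getLast?_append_of_ne_nil _ (by simp)]; exact hl
      have hhq : x ∈ q.head? := by rw [hrest]; rfl
      exact hq.2.2 l hlq x hhq
    · have hsub : List.Sublist (x :: y :: b) q := by
        rw [hrest, hab]
        exact (List.sublist_append_right a (y :: b)).cons₂ x
      have hnod : (x :: y :: b).Nodup := hq.2.1.sublist hsub
      have hperm : P1.Perm (x :: (y :: b)) := by
        rw [hP1]
        simpa using (List.perm_middle (a := x) (l₁ := y :: b) (l₂ := []))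
      exact hperm.nodup_iff.2 hnod
    · rw [hP1, List.head?_append_of_ne_nil _ (by simp)]; rfl
    · rw [hP1, List.getLast?_concat]
  have hne01 : P0 ≠ P1 := by
    intro hh
    have h0 : P0.head? = some x := hd0.2.2.1
    have h1 : P1.head? = some y := hd1.2.2.1
    rw [hh, h1] at h0
    exact hxy (Option.some.inj h0).symm
  have key : ∀ w, w ∈ P0 → w ∈ P1 → w = x ∨ w = y := by
    intro w h0 h1
    by_contra hcon
    push_neg at hcon
    have hwa : w ∈ a := by
      rw [hP0] at h0
      simp at h0
      rcases h0 with (rfl | hh | rfl)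
      · exact absurd rfl hcon.1
      · exact hh
      · exact absurd rfl hcon.2
    have hwb : w ∈ y :: b := by
      rw [hP1] at h1
      simp at h1
      rcases h1 with (rfl | hh | rfl)
      · exact absurd rfl hcon.2
      · exact List.mem_cons_of_mem y hh
      · exact absurd rfl hcon.1
    have hn2 : (a ++ y :: b).Nodup := by
      have h := hn'
      rw [List.cons_append] at h
      exact (List.nodup_cons.1 h).2
    have hdisj := List.disjoint_of_nodup_append hn2
    exact hdisj hwa hwb
  refine ⟨![P0, P1], ?_, ?_, ?_, ?_⟩
  · intro i j hij
    fin_cases i <;> fin_cases j <;>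
      simp only [Matrix.cons_val_zero, Matrix.cons_val_one, Matrix.head_cons] at hij
    · rfl
    · exact absurd hij hne01
    · exact absurd hij.symm hne01
    · rfl
  · intro i
    fin_cases i
    · exact Or.inl (by simpa using hd0)
    · exact Or.inr (by simpa using hd1)
  · intro i j hij w hwi hwj
    fin_cases i <;> fin_cases j
    · exact absurd rfl hij
    · exact key w (by simpa using hwi) (by simpa using hwj)
    · exact key w (by simpa using hwj) (by simpa using hwi)
    · exact absurd rfl hij
  · intro w
    have := hqall w
    rw [hqeq] at this
    simp at this
    rcases this with (rfl | hh | rfl | hh)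
    · exact ⟨0, by simp [hP0]⟩
    · exact ⟨0, by simp [hP0, hh]⟩
    · exact ⟨1, by simp [hP1]⟩
    · exact ⟨1, by simp [hP1, hh]⟩
end

section
/- For every integer k ≥ 0, every (2k+1)-strong tournament T is (k+2)*-weakly connected; that is, for every pair of distinct vertices x, y of T there exist k+2 internally disjoint directed paths between x and y (each directed from x to y or from y to x) whose union contains every vertex of T. -/
variable {V : Type*}

section ChainCompat
set_option linter.deprecated false

theorem chainC_cons {α : Type*} {R : α → α → Prop} {a b : α} {l : List α} :
    List.Chain R a (b :: l) ↔ R a b ∧ List.Chain R b l := List.isChain_cons_cons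

theorem chainC_singleton {α : Type*} {R : α → α → Prop} {a b : α} :
    List.Chain R a [b] ↔ R a b := by
  show List.IsChain R [a, b] ↔ R a b
  simp

theorem chainC_split {α : Type*} {R : α → α → Prop} {a b : α} {l₁ l₂ : List α} :
    List.Chain R a (l₁ ++ b :: l₂) ↔ List.Chain R a (l₁ ++ [b]) ∧ List.Chain R b l₂ :=
  List.isChain_cons_split

theorem chainC_map {α β : Type*} {R : α → α → Prop} {S : β → β → Prop} (f : α → β)
    (H : ∀ a b : α, R a b → S (f a) (f b)) {a : α} {l : List α} (p : List.Chain R a l) :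
    List.Chain S (f a) (List.map f l) :=
  List.isChain_map_of_isChain (l := a :: l) f H p

theorem exists_chainC_of_rtg {α : Type*} {r : α → α → Prop} {a b : α}
    (h : Relation.ReflTransGen r a b) :
    ∃ l, List.Chain r a l ∧ List.getLast (a :: l) (List.cons_ne_nil _ _) = b :=
  List.exists_isChain_cons_of_relationReflTransGen h

end ChainCompat

section Aux
open List

variable {W : Type*} {q : W → W → Prop}

lemma tourn_ne (hq : IsTournament q) {a b : W} (h : q a b) : a ≠ b := by
  rintro rfl; exact hq.1 a h

lemma tourn_not (hq : IsTournament q) {a b : W} (h : q a b) : ¬ q b a :=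
  (hq.2 a b (tourn_ne hq h)).mp h

lemma tourn_total (hq : IsTournament q) {a b : W} (hab : a ≠ b) (h : ¬ q a b) : q b a := by
  by_contra hba
  exact h (((hq.2 a b hab)).mpr hba)

lemma rtg_closed {p : W → Prop} {u v : W} (h : Relation.ReflTransGen q u v)
    (hu : p u) (hcl : ∀ a b, p a → q a b → p b) : p v := by
  induction h with
  | refl => exact hu
  | tail _ hbc ih => exact hcl _ _ ih hbc

lemma triangle_aux (hq : IsTournament q) {u : W} :
    ∀ (m : List W) (v : W), Chain q v m → (v :: m).getLast (by simp) = u → q u v →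
      ∃ a b c : W, q a b ∧ q b c ∧ q c a := by
  intro m
  induction m with
  | nil =>
    intro v _ hlast huv
    simp only [getLast_singleton] at hlast
    subst hlast; exact absurd huv (hq.1 _)
  | cons c m' ih =>
    intro v hch hlast huv
    rw [chainC_cons] at hch
    obtain ⟨hvc, hch'⟩ := hch
    by_cases hcu : q c u
    · exact ⟨u, v, c, huv, hvc, hcu⟩
    · rcases eq_or_ne c u with rfl | hne
      · exact absurd hvc (tourn_not hq huv)
      · have huc : q u c := tourn_total hq hne hcu
        exact ih c hch' (by rw [← hlast]; simp [getLast_cons]) huc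

lemma exists_triangle [Fintype W] (hq : IsTournament q) (hs : StronglyConnected q)
    (h3 : 3 ≤ Fintype.card W) : ∃ a b c : W, q a b ∧ q b c ∧ q c a := by
  obtain ⟨u, v, huv⟩ := Fintype.exists_pair_of_one_lt_card (α := W) (by omega)
  have harc : ∃ a b : W, q a b := by
    by_cases h : q u v
    · exact ⟨u, v, h⟩
    · exact ⟨v, u, tourn_total hq huv h⟩
  obtain ⟨a, b, hab⟩ := harc
  obtain ⟨l, hl, hlast⟩ := exists_chainC_of_rtg (hs b a)
  exact triangle_aux hq l b hl hlast hab

lemma chain_snoc : ∀ {l : List W} {a c : W}, Chain q a (l ++ [c]) ↔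
    Chain q a l ∧ q ((a :: l).getLast (by simp)) c := by
  intro l
  induction l with
  | nil => intro a c; simp [chainC_singleton, List.Chain.nil]
  | cons b l' ih =>
    intro a c
    rw [cons_append, chainC_cons, chainC_cons, ih, getLast_cons_cons]
    tauto

lemma insert_path (hq : IsTournament q) {v : W} :
    ∀ (m : List W) (a : W), Chain q a m → q a v → v ∉ a :: m →
      ¬ q ((a :: m).getLast (by simp)) v →
      ∃ m₁ m₂ : List W, m = m₁ ++ m₂ ∧ m₂ ≠ [] ∧ Chain q a (m₁ ++ v :: m₂) := by
  intro m
  induction m with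
  | nil =>
    intro a _ hav _ hlast
    simp only [getLast_singleton] at hlast
    exact absurd hav hlast
  | cons b m' ih =>
    intro a hch hav hv hlast
    rw [chainC_cons] at hch
    obtain ⟨hab, hch'⟩ := hch
    by_cases hbv : q b v
    · have hv' : v ∉ b :: m' := fun h => hv (mem_cons_of_mem _ h)
      have hlast' : ¬ q ((b :: m').getLast (by simp)) v := by
        rw [getLast_cons_cons] at hlast; exact hlast
      obtain ⟨m₁, m₂, heq, hne, hchn⟩ := ih b hch' hbv hv' hlast'
      exact ⟨b :: m₁, m₂, by rw [heq]; rfl, hne, by rw [cons_append, chainC_cons]; exact ⟨hab, hchn⟩⟩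
    · have hbne : b ≠ v := fun h => hv (by rw [h]; simp)
      have hvb : q v b := tourn_total hq hbne hbv
      exact ⟨[], b :: m', rfl, by simp, by rw [nil_append, chainC_cons, chainC_cons]; exact ⟨hav, hvb, hch'⟩⟩

lemma snoc_decomp {m1 m2 l1 : List W} {c : W} (hm2 : m2 ≠ [])
    (heq : m1 ++ m2 = l1 ++ [c]) : m1 ++ m2.dropLast = l1 ∧ m2 = m2.dropLast ++ [c] := by
  have h1 : m2.dropLast ++ [m2.getLast hm2] = m2 := dropLast_append_getLast hm2
  have h2 : (m1 ++ m2.dropLast) ++ [m2.getLast hm2] = l1 ++ [c] := by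
    rw [append_assoc, h1]; exact heq
  obtain ⟨h3, h4⟩ := append_inj' h2 (by simp)
  have h5 : m2.getLast hm2 = c := by simpa using h4
  exact ⟨h3, by rw [← h5] at *; exact h1.symm⟩

lemma cycle_insert (hq : IsTournament q) {a v : W} {l : List W}
    (hC : Chain q a (l ++ [a])) (hnd : (a :: l).Nodup) (hv : v ∉ a :: l)
    (hc1 : ∃ c ∈ a :: l, q c v) (hc2 : ∃ c ∈ a :: l, q v c) :
    ∃ l' : List W, Chain q a (l' ++ [a]) ∧ (a :: l').Nodup ∧
      (a :: l').length = (a :: l).length + 1 := by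
  by_cases hQa : q a v
  · obtain ⟨c0, hc0mem, hc0⟩ := hc2
    have hc0nv : ¬ q c0 v := tourn_not hq hc0
    have hc0ne : c0 ≠ a := by rintro rfl; exact (tourn_not hq hQa) hc0
    have hc0l : c0 ∈ l := by
      rcases mem_cons.1 hc0mem with h | h
      · exact absurd h hc0ne
      · exact h
    obtain ⟨l1, l2, rfl⟩ := append_of_mem hc0l
    have hC' : Chain q a (l1 ++ c0 :: (l2 ++ [a])) := by simpa using hC
    rw [chainC_split] at hC'
    obtain ⟨h1, h2⟩ := hC'
    have hlast1 : (a :: (l1 ++ [c0])).getLast (by simp) = c0 := getLast_concat (l := a :: l1)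
    have hvni : v ∉ a :: (l1 ++ [c0]) := by
      intro h; apply hv
      rcases mem_cons.1 h with h | h
      · exact h ▸ mem_cons_self
      · rcases mem_append.1 h with h | h
        · exact mem_cons_of_mem _ (mem_append.2 (Or.inl h))
        · simp only [mem_singleton] at h; subst h; exact hc0mem
    obtain ⟨m1, m2, heq, hm2, hchn⟩ :=
      insert_path hq (l1 ++ [c0]) a h1 hQa hvni (by rw [hlast1]; exact hc0nv)
    obtain ⟨hdl, hm2eq⟩ := snoc_decomp hm2 heq.symm
    refine ⟨m1 ++ v :: (m2.dropLast ++ c0 :: l2), ?_, ?_, ?_⟩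
    · have hsh : (m1 ++ v :: (m2.dropLast ++ c0 :: l2)) ++ [a]
          = (m1 ++ v :: m2.dropLast) ++ c0 :: (l2 ++ [a]) := by
        simp [append_assoc]
      rw [hsh, chainC_split]
      constructor
      · have : (m1 ++ v :: m2.dropLast) ++ [c0] = m1 ++ v :: m2 := by
          rw [hm2eq]; simp [append_assoc]
        rw [this]; exact hchn
      · exact h2
    · have hsh : a :: (m1 ++ v :: (m2.dropLast ++ c0 :: l2))
          = (a :: m1) ++ v :: (m2.dropLast ++ c0 :: l2) := rfl
      rw [hsh, nodup_middle]
      have : (a :: m1) ++ (m2.dropLast ++ c0 :: l2) = a :: (l1 ++ c0 :: l2) := by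
        simp only [cons_append]
        rw [← append_assoc, hdl]
      rw [this]
      exact nodup_cons.2 ⟨hv, hnd⟩
    · have hlen : m1.length + m2.dropLast.length = l1.length := by
        rw [← length_append, hdl]
      simp only [length_cons, length_append, length_cons]
      omega
  · obtain ⟨c1, hc1mem, hc1v⟩ := hc1
    have hc1ne : c1 ≠ a := by rintro rfl; exact hQa hc1v
    have hc1l : c1 ∈ l := by
      rcases mem_cons.1 hc1mem with h | h
      · exact absurd h hc1ne
      · exact h
    obtain ⟨l1, l2, rfl⟩ := append_of_mem hc1l
    have hC' : Chain q a (l1 ++ c1 :: (l2 ++ [a])) := by simpa using hC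
    rw [chainC_split] at hC'
    obtain ⟨h1, h2⟩ := hC'
    have hlast2 : (c1 :: (l2 ++ [a])).getLast (by simp) = a := getLast_concat (l := c1 :: l2)
    have hvni : v ∉ c1 :: (l2 ++ [a]) := by
      intro h; apply hv
      rcases mem_cons.1 h with h | h
      · exact h ▸ hc1mem
      · rcases mem_append.1 h with h | h
        · exact mem_cons_of_mem _ (mem_append.2 (Or.inr (mem_cons_of_mem _ h)))
        · simp only [mem_singleton] at h; subst h; exact mem_cons_self
    obtain ⟨m1, m2, heq, hm2, hchn⟩ :=
      insert_path hq (l2 ++ [a]) c1 h2 hc1v hvni (by rw [hlast2]; exact hQa)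
    obtain ⟨hdl, hm2eq⟩ := snoc_decomp hm2 heq.symm
    refine ⟨l1 ++ c1 :: (m1 ++ v :: m2.dropLast), ?_, ?_, ?_⟩
    · have hsh : (l1 ++ c1 :: (m1 ++ v :: m2.dropLast)) ++ [a]
          = l1 ++ c1 :: (m1 ++ v :: m2) := by
        rw [hm2eq]; simp [append_assoc]
      rw [hsh, chainC_split]
      exact ⟨h1, hchn⟩
    · have hsh : a :: (l1 ++ c1 :: (m1 ++ v :: m2.dropLast))
          = (a :: l1 ++ c1 :: m1) ++ v :: m2.dropLast := by simp
      rw [hsh, nodup_middle]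
      have : (a :: l1 ++ c1 :: m1) ++ m2.dropLast = a :: (l1 ++ c1 :: l2) := by
        simp only [cons_append, append_assoc]
        rw [hdl]
      rw [this]
      exact nodup_cons.2 ⟨hv, hnd⟩
    · have hlen : m1.length + m2.dropLast.length = l2.length := by
        rw [← length_append, hdl]
      simp only [length_cons, length_append, length_cons]
      omega

lemma cycle_extend [Fintype W] (hq : IsTournament q) (hs : StronglyConnected q)
    {a : W} {l : List W} (hC : Chain q a (l ++ [a])) (hnd : (a :: l).Nodup)
    (hv : ∃ w : W, w ∉ a :: l) :
    ∃ (a' : W) (l' : List W), Chain q a' (l' ++ [a']) ∧ (a' :: l').Nodup ∧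
      (a :: l).length < (a' :: l').length := by
  obtain ⟨v, hvout⟩ := hv
  by_cases hmix : ∃ w, w ∉ a :: l ∧ (∃ c ∈ a :: l, q c w) ∧ (∃ c ∈ a :: l, q w c)
  · obtain ⟨w, hw, h1, h2⟩ := hmix
    obtain ⟨l', hc, hn, hlen⟩ := cycle_insert hq hC hnd hw h1 h2
    exact ⟨a, l', hc, hn, by omega⟩
  · have hclass : ∀ w, w ∉ a :: l → (∀ c ∈ a :: l, q w c) ∨ (∀ c ∈ a :: l, q c w) := by
      intro w hw
      by_cases hA : ∀ c ∈ a :: l, q w c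
      · exact Or.inl hA
      · right
        intro c hc
        have hnm : ¬ ((∃ c ∈ a :: l, q c w) ∧ (∃ c ∈ a :: l, q w c)) :=
          fun h => hmix ⟨w, hw, h.1, h.2⟩
        push_neg at hA
        obtain ⟨c0, hc0, hc0n⟩ := hA
        have hc0w : q c0 w := tourn_total hq (fun h => hw (h ▸ hc0)) hc0n
        have hno : ¬ ∃ c ∈ a :: l, q w c := fun h => hnm ⟨⟨c0, hc0, hc0w⟩, h⟩
        have hwc : ¬ q w c := fun h => hno ⟨c, hc, h⟩
        exact tourn_total hq (fun h => hw (h ▸ hc)) hwc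
    by_cases harc : ∃ b' a'', (b' ∉ a :: l ∧ ∀ c ∈ a :: l, q c b') ∧
        (a'' ∉ a :: l ∧ ∀ c ∈ a :: l, q a'' c) ∧ q b' a''
    · obtain ⟨b', a'', ⟨hb'o, hb'⟩, ⟨ha''o, ha''⟩, hba⟩ := harc
      refine ⟨a, l ++ [b', a''], ?_, ?_, ?_⟩
      · have hsh : (l ++ [b', a'']) ++ [a] = l ++ b' :: [a'', a] := by simp
        rw [hsh, chainC_split]
        constructor
        · have hCl : Chain q a l ∧ q ((a :: l).getLast (by simp)) a := chain_snoc.1 hC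
          exact chain_snoc.2 ⟨hCl.1, hb' _ (getLast_mem _)⟩
        · rw [chainC_cons, chainC_singleton]
          exact ⟨hba, ha'' _ (mem_cons_self)⟩
      · have hsh : a :: (l ++ [b', a'']) = (a :: l) ++ [b', a''] := rfl
        rw [hsh]
        refine Nodup.append hnd ?_ ?_
        · simp [tourn_ne hq hba]
        · intro u hu hu2
          simp only [mem_cons, mem_singleton, not_mem_nil, or_false] at hu2
          rcases hu2 with rfl | rfl
          · exact hb'o hu
          · exact ha''o hu
      · simp
    · exfalso
      rcases hclass v hvout with hA | hB
      · have hp : ¬ (v ∉ a :: l ∧ ∀ c ∈ a :: l, q v c) := by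
          refine rtg_closed (p := fun w => ¬ (w ∉ a :: l ∧ ∀ c ∈ a :: l, q w c)) (hs a v) ?_ ?_
          · intro h; exact h.1 (mem_cons_self)
          · intro w u hw hwu hu
            by_cases hwin : w ∈ a :: l
            · exact tourn_not hq (hu.2 w hwin) hwu
            · rcases hclass w hwin with hwA | hwB
              · exact hw ⟨hwin, hwA⟩
              · exact harc ⟨w, u, ⟨hwin, hwB⟩, hu, hwu⟩
        exact hp ⟨hvout, hA⟩
      · have hp : a ∉ a :: l ∧ ∀ c ∈ a :: l, q c a := by
          refine rtg_closed (p := fun w => w ∉ a :: l ∧ ∀ c ∈ a :: l, q c w) (hs v a)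
            ⟨hvout, hB⟩ ?_
          intro w u hw hwu
          by_cases huin : u ∈ a :: l
          · exact absurd hwu (tourn_not hq (hw.2 u huin))
          · rcases hclass u huin with huA | huB
            · exact absurd hwu (fun h => harc ⟨w, u, hw, ⟨huin, huA⟩, h⟩)
            · exact ⟨huin, huB⟩
        exact hp.1 (mem_cons_self)

lemma ham_cycle [Fintype W] (hq : IsTournament q) (hs : StronglyConnected q)
    (h3 : 3 ≤ Fintype.card W) :
    ∃ (a : W) (l : List W), Chain q a (l ++ [a]) ∧ (a :: l).Nodup ∧ ∀ w : W, w ∈ a :: l := by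
  classical
  obtain ⟨a, b, c, hab, hbc, hca⟩ := exists_triangle hq hs h3
  suffices h : ∀ (n : ℕ) (a : W) (l : List W), Chain q a (l ++ [a]) → (a :: l).Nodup →
      Fintype.card W ≤ (a :: l).length + n →
      ∃ a' l', Chain q a' (l' ++ [a']) ∧ (a' :: l').Nodup ∧ ∀ w : W, w ∈ a' :: l' by
    refine h (Fintype.card W) a [b, c] ?_ ?_ (by simp)
    · simp only [cons_append, nil_append, chainC_cons, chainC_singleton]
      exact ⟨hab, hbc, hca, Chain.nil⟩
    · have h1 : a ≠ b := tourn_ne hq hab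
      have h2 : b ≠ c := tourn_ne hq hbc
      have h3' : c ≠ a := tourn_ne hq hca
      simp [h1, h2, h3', Ne.symm h3']
  intro n
  induction n with
  | zero =>
    intro a l hC hnd hle
    refine ⟨a, l, hC, hnd, fun w => ?_⟩
    have h1 : (a :: l).toFinset.card = (a :: l).length := List.toFinset_card_of_nodup hnd
    have h2 : (a :: l).toFinset = Finset.univ := by
      apply Finset.eq_univ_of_card
      have h3' : (a :: l).toFinset.card ≤ Fintype.card W := Finset.card_le_univ _
      omega
    have : w ∈ (a :: l).toFinset := h2 ▸ Finset.mem_univ w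
    simpa using this
  | succ n ih =>
    intro a l hC hnd hle
    by_cases hall : ∀ w, w ∈ a :: l
    · exact ⟨a, l, hC, hnd, hall⟩
    · push_neg at hall
      obtain ⟨a', l', hC', hnd', hlen⟩ := cycle_extend hq hs hC hnd hall
      exact ih a' l' hC' hnd' (by omega)

lemma cycle_rotate {a w : W} {l : List W} (hC : Chain q a (l ++ [a]))
    (hnd : (a :: l).Nodup) (hw : w ∈ a :: l) :
    ∃ l' : List W, Chain q w (l' ++ [w]) ∧ (w :: l').Nodup ∧
      ∀ u : W, u ∈ w :: l' ↔ u ∈ a :: l := by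
  rcases mem_cons.1 hw with rfl | hw'
  · exact ⟨l, hC, hnd, fun u => Iff.rfl⟩
  · obtain ⟨l1, l2, rfl⟩ := append_of_mem hw'
    have hC' : Chain q a (l1 ++ w :: (l2 ++ [a])) := by simpa using hC
    rw [chainC_split] at hC'
    obtain ⟨h1, h2⟩ := hC'
    have hperm : (w :: (l2 ++ a :: l1)).Perm (a :: (l1 ++ w :: l2)) := by
      have e1 : w :: (l2 ++ a :: l1) = (w :: l2) ++ (a :: l1) := rfl
      have e2 : a :: (l1 ++ w :: l2) = (a :: l1) ++ (w :: l2) := rfl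
      rw [e1, e2]
      exact perm_append_comm
    refine ⟨l2 ++ a :: l1, ?_, ?_, ?_⟩
    · have hsh : (l2 ++ a :: l1) ++ [w] = l2 ++ a :: (l1 ++ [w]) := by simp
      rw [hsh, chainC_split]
      exact ⟨h2, h1⟩
    · exact hperm.nodup_iff.2 hnd
    · exact fun u => hperm.mem_iff

lemma three_le_card [Fintype W] (hq : IsTournament q) (hs : StronglyConnected q)
    {u v : W} (huv : u ≠ v) : 3 ≤ Fintype.card W := by
  classical
  by_contra hlt
  push_neg at hlt
  have h2 : 2 ≤ Fintype.card W := Fintype.one_lt_card_iff_nontrivial.2 ⟨⟨u, v, huv⟩⟩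
  have hcard : Fintype.card W = 2 := by omega
  have huniv : ∀ w : W, w = u ∨ w = v := by
    intro w
    have hc : ({u, v} : Finset W).card = 2 := Finset.card_pair huv
    have he : ({u, v} : Finset W) = Finset.univ :=
      Finset.eq_univ_of_card _ (by rw [hc, hcard])
    have : w ∈ ({u, v} : Finset W) := he ▸ Finset.mem_univ w
    simpa using this
  have key : ∀ a b : W, a ≠ b → (∀ w : W, w = a ∨ w = b) → q a b → False := by
    intro a b hab hall hqab
    have hba : b = a := by
      refine rtg_closed (p := fun w => w = b) (hs b a) rfl ?_ ▸ rfl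
      intro s t hs' hst
      subst hs'
      rcases hall t with rfl | rfl
      · exact absurd hst (tourn_not hq hqab)
      · exact absurd hst (hq.1 _)
    exact hab hba.symm
  by_cases hquv : q u v
  · exact key u v huv huniv hquv
  · exact key v u huv.symm (fun w => (huniv w).symm) (tourn_total hq huv hquv)

end Aux

section Conn
open List

variable {r : V → V → Prop}

lemma rtg_subtype {S : Set V} {u v : V} (hu : u ∉ S)
    (h : Relation.ReflTransGen (fun a b => a ∉ S ∧ b ∉ S ∧ r a b) u v) :
    ∀ hv : v ∉ S, Relation.ReflTransGen (fun a b : {w : V // w ∉ S} => r a b) ⟨u, hu⟩ ⟨v, hv⟩ := by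
  induction h with
  | refl => intro _; exact Relation.ReflTransGen.refl
  | @tail b c _ hbc ih => intro _; exact (ih hbc.1).tail hbc.2.2

def PreConn (r : V → V → Prop) (x y : V) (l : List V) : Prop :=
  l ≠ [] ∧ l.length ≤ 2 ∧ l.Nodup ∧ (∀ w ∈ l, w ≠ x ∧ w ≠ y) ∧
    (List.Chain' r (x :: l ++ [y]) ∨ List.Chain' r (y :: l ++ [x]))

lemma exists_connector (hT : IsTournament r) {x y : V} (hxy : x ≠ y) {S : Set V}
    (hx : x ∉ S) (hy : y ∉ S)
    (hs : ∀ u v : V, u ∉ S → v ∉ S →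
      Relation.ReflTransGen (fun a b => a ∉ S ∧ b ∉ S ∧ r a b) u v)
    (hz : ∃ z : V, z ∉ S ∧ z ≠ x ∧ z ≠ y) :
    ∃ l : List V, PreConn r x y l ∧ (∀ w ∈ l, w ∉ S) := by
  by_cases h1 : ∃ v, v ∉ S ∧ v ≠ x ∧ v ≠ y ∧ ((r x v ∧ r v y) ∨ (r y v ∧ r v x))
  · obtain ⟨v, hvS, hvx, hvy, hv⟩ := h1
    refine ⟨[v], ⟨by simp, by simp, by simp, by simpa using ⟨hvx, hvy⟩, ?_⟩, by simpa using hvS⟩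
    rcases hv with ⟨h1', h2'⟩ | ⟨h1', h2'⟩
    · exact Or.inl (by simp [List.Chain', h1', h2'])
    · exact Or.inr (by simp [List.Chain', h1', h2'])
  · have hAB : ∀ v, v ∉ S → v ≠ x → v ≠ y → (r x v ∧ r y v) ∨ (r v x ∧ r v y) := by
      intro v hvS hvx hvy
      have hnv : ¬ ((r x v ∧ r v y) ∨ (r y v ∧ r v x)) := fun h => h1 ⟨v, hvS, hvx, hvy, h⟩
      by_cases hxv : r x v
      · by_cases hyv : r y v
        · exact Or.inl ⟨hxv, hyv⟩
        · exact absurd (Or.inl ⟨hxv, tourn_total hT hvy.symm hyv⟩) hnv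
      · have hvx' : r v x := tourn_total hT hvx.symm hxv
        by_cases hyv : r y v
        · exact absurd (Or.inr ⟨hyv, hvx'⟩) hnv
        · exact Or.inr ⟨hvx', tourn_total hT hvy.symm hyv⟩
    by_cases h2 : ∃ a b, a ∉ S ∧ b ∉ S ∧ a ≠ x ∧ a ≠ y ∧ b ≠ x ∧ b ≠ y ∧
        r x a ∧ r y a ∧ r b x ∧ r b y ∧ r a b
    · obtain ⟨a, b, haS, hbS, hax, hay, hbx, hby, hxa, hya, hbx', hby', hab⟩ := h2
      refine ⟨[a, b], ⟨by simp, by simp, ?_, ?_, ?_⟩, ?_⟩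
      · simp [tourn_ne hT hab]
      · intro w hw
        rcases (by simpa using hw : w = a ∨ w = b) with rfl | rfl
        · exact ⟨hax, hay⟩
        · exact ⟨hbx, hby⟩
      · exact Or.inl (by simp [List.Chain', hxa, hab, hby'])
      · intro w hw
        rcases (by simpa using hw : w = a ∨ w = b) with rfl | rfl
        · exact haS
        · exact hbS
    · exfalso
      by_cases hB : ∃ b0, b0 ∉ S ∧ b0 ≠ x ∧ b0 ≠ y ∧ r b0 x ∧ r b0 y
      · obtain ⟨b0, hb0S, hb0x, hb0y, hb0⟩ := hB
        have hp : b0 ∉ S ∧ ¬ (b0 ≠ x ∧ b0 ≠ y ∧ r b0 x ∧ r b0 y) := by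
          refine rtg_closed (p := fun w => w ∉ S ∧ ¬ (w ≠ x ∧ w ≠ y ∧ r w x ∧ r w y))
            (hs x b0 hx hb0S) ⟨hx, fun h => h.1 rfl⟩ ?_
          rintro w u ⟨hwS, hw⟩ ⟨_, huS, hwu⟩
          refine ⟨huS, ?_⟩
          rintro ⟨hux, huy, hu1, hu2⟩
          rcases eq_or_ne w x with rfl | hwx
          · exact tourn_not hT hwu hu1
          rcases eq_or_ne w y with rfl | hwy
          · exact tourn_not hT hwu hu2
          rcases hAB w hwS hwx hwy with ⟨hxw, hyw⟩ | ⟨hwx', hwy'⟩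
          · exact h2 ⟨w, u, hwS, huS, hwx, hwy, hux, huy, hxw, hyw, hu1, hu2, hwu⟩
          · exact hw ⟨hwx, hwy, hwx', hwy'⟩
        exact hp.2 ⟨hb0x, hb0y, hb0.1, hb0.2⟩
      · rcases hz with ⟨z, hzS, hzx, hzy⟩
        rcases hAB z hzS hzx hzy with ⟨hxz, hyz⟩ | ⟨hzx', hzy'⟩
        · -- z ∈ A; show x unreachable from z
          have hp : x ∉ S ∧ x ≠ x ∧ x ≠ y ∧ r x x ∧ r y x := by
            refine rtg_closed (p := fun w => w ∉ S ∧ w ≠ x ∧ w ≠ y ∧ r x w ∧ r y w)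
              (hs z x hzS hx) ⟨hzS, hzx, hzy, hxz, hyz⟩ ?_
            rintro w u ⟨hwS, hwx, hwy, hxw, hyw⟩ ⟨_, huS, hwu⟩
            rcases eq_or_ne u x with rfl | hux
            · exact absurd hwu (tourn_not hT hxw)
            rcases eq_or_ne u y with rfl | huy
            · exact absurd hwu (tourn_not hT hyw)
            rcases hAB u huS hux huy with ⟨h1', h2'⟩ | ⟨h1', h2'⟩
            · exact ⟨huS, hux, huy, h1', h2'⟩
            · exact absurd ⟨u, huS, hux, huy, h1', h2'⟩ hB
          exact hp.2.1 rfl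
        · exact hB ⟨z, hzS, hzx, hzy, hzx', hzy'⟩

end Conn

section Conn2
open List

variable {r : V → V → Prop}

lemma exists_connectors [Fintype V] (hT : IsTournament r) {k : ℕ}
    (hstrong : KStrong r (2 * k + 1)) {x y : V} (hxy : x ≠ y) :
    ∃ cs : List (List V), cs.length = k ∧ cs.flatten.Nodup ∧
      (∀ l ∈ cs, PreConn r x y l) := by
  classical
  have hcard : 2 * k + 2 ≤ Fintype.card V := hstrong.1
  suffices h : ∀ j, j ≤ k → ∃ cs : List (List V), cs.length = j ∧ cs.flatten.Nodup ∧
      (∀ l ∈ cs, PreConn r x y l) from h k le_rfl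
  intro j hj
  induction j with
  | zero => exact ⟨[], rfl, by simp, by simp⟩
  | succ j ih =>
    obtain ⟨cs, hlen, hnd, hpc⟩ := ih (by omega)
    have hflen : cs.flatten.length ≤ 2 * j := by
      rw [length_flatten]
      calc (cs.map length).sum ≤ (cs.map length).length • 2 := by
            refine List.sum_le_card_nsmul _ _ ?_
            intro n hn
            obtain ⟨l, hl, rfl⟩ := mem_map.1 hn
            exact (hpc l hl).2.1
        _ = 2 * j := by simp [hlen, Nat.smul_one_eq_cast]; ring
    set S : Set V := {w | w ∈ cs.flatten} with hSdef
    have hSn : S.ncard = cs.flatten.length := by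
      have hSeq : S = ↑cs.flatten.toFinset := by ext w; simp [hSdef]
      rw [hSeq, Set.ncard_coe_finset, List.toFinset_card_of_nodup hnd]
    have hx : x ∉ S := by
      intro hxS
      obtain ⟨l, hl, hxl⟩ := mem_flatten.1 hxS
      exact ((hpc l hl).2.2.2.1 x hxl).1 rfl
    have hy : y ∉ S := by
      intro hyS
      obtain ⟨l, hl, hyl⟩ := mem_flatten.1 hyS
      exact ((hpc l hl).2.2.2.1 y hyl).2 rfl
    have hstr : ∀ u v : V, u ∉ S → v ∉ S →
        Relation.ReflTransGen (fun a b => a ∉ S ∧ b ∉ S ∧ r a b) u v := by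
      intro u v hu hv
      exact hstrong.2 S (by omega) u v hu hv
    have hz : ∃ z : V, z ∉ S ∧ z ≠ x ∧ z ≠ y := by
      by_contra hno
      push_neg at hno
      have hsub : (Finset.univ : Finset V) ⊆ cs.flatten.toFinset ∪ {x, y} := by
        intro z _
        rcases eq_or_ne z x with rfl | hzx
        · simp
        rcases eq_or_ne z y with rfl | hzy
        · simp
        have : z ∈ S := by
          by_contra hzS
          exact hzy (hno z hzS hzx)
        simp only [Finset.mem_union, List.mem_toFinset]
        exact Or.inl this
      have hle := Finset.card_le_card hsub
      rw [Finset.card_univ] at hle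
      have h1 : (cs.flatten.toFinset ∪ ({x, y} : Finset V)).card ≤
          cs.flatten.toFinset.card + 2 := by
        calc _ ≤ cs.flatten.toFinset.card + ({x, y} : Finset V).card :=
              Finset.card_union_le _ _
          _ ≤ _ := by
              have : ({x, y} : Finset V).card ≤ 2 := Finset.card_insert_le _ _ |>.trans (by simp)
              omega
      have h2 : cs.flatten.toFinset.card ≤ 2 * j := by
        calc cs.flatten.toFinset.card ≤ cs.flatten.length := List.toFinset_card_le _
          _ ≤ 2 * j := hflen
      omega
    obtain ⟨l, hl, hlS⟩ := exists_connector hT hxy hx hy hstr hz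
    refine ⟨l :: cs, by simp [hlen], ?_, ?_⟩
    · rw [flatten_cons]
      refine Nodup.append hl.2.2.1 hnd ?_
      intro w hw1 hw2
      exact hlS w hw1 hw2
    · intro l' hl'
      rcases mem_cons.1 hl' with rfl | h
      · exact hl
      · exact hpc l' h

end Conn2

section Main
open List

variable {r : V → V → Prop}

lemma mk_dipath {x y : V} (hxy : x ≠ y) {l : List V} (hnd : l.Nodup)
    (hne : ∀ w ∈ l, w ≠ x ∧ w ≠ y) (hch : List.Chain' r (x :: (l ++ [y]))) :
    IsDipath r x y (x :: (l ++ [y])) := by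
  refine ⟨hch, ?_, rfl, ?_⟩
  · rw [nodup_cons]
    constructor
    · intro hx
      rcases mem_append.1 hx with h | h
      · exact (hne x h).1 rfl
      · exact hxy (by simpa using h)
    · refine Nodup.append hnd (by simp) ?_
      intro w hw hw2
      exact (hne w hw).2 (by simpa using hw2)
  · show ((x :: l) ++ [y]).getLast? = some y
    exact getLast?_concat

end Main

open List in
/-- For every `k ≥ 0`, every `(2k+1)`-strong tournament is
`(k+2)*`-weakly connected. -/
theorem stmt6 [Fintype V] (r : V → V → Prop) (hT : IsTournament r)
    (k : ℕ) (hstrong : KStrong r (2 * k + 1)) (x y : V) (hxy : x ≠ y) :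
    WeakStarContainer r x y (k + 2) := by
  classical
  obtain ⟨cs, hlen, hnd, hpc⟩ := exists_connectors hT hstrong hxy
  set S : Set V := {w | w ∈ cs.flatten} with hSdef
  have hflen : cs.flatten.length ≤ 2 * k := by
    rw [length_flatten]
    calc (cs.map length).sum ≤ (cs.map length).length • 2 := by
          refine List.sum_le_card_nsmul _ _ ?_
          intro n hn
          obtain ⟨l, hl, rfl⟩ := mem_map.1 hn
          exact (hpc l hl).2.1
      _ = 2 * k := by simp [hlen, Nat.smul_one_eq_cast]; ring
  have hSn : S.ncard = cs.flatten.length := by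
    have hSeq : S = ↑cs.flatten.toFinset := by ext w; simp [hSdef]
    rw [hSeq, Set.ncard_coe_finset, List.toFinset_card_of_nodup hnd]
  have hwS : ∀ (l : List V), l ∈ cs → ∀ w ∈ l, w ∈ S := by
    intro l hl w hw
    exact mem_flatten.2 ⟨l, hl, hw⟩
  have hx : x ∉ S := fun hxS => by
    obtain ⟨l, hl, hxl⟩ := mem_flatten.1 hxS
    exact ((hpc l hl).2.2.2.1 x hxl).1 rfl
  have hy : y ∉ S := fun hyS => by
    obtain ⟨l, hl, hyl⟩ := mem_flatten.1 hyS
    exact ((hpc l hl).2.2.2.1 y hyl).2 rfl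
  have hstr := hstrong.2 S (by omega)
  have hqT : IsTournament (fun a b : {w : V // w ∉ S} => r a.1 b.1) :=
    ⟨fun a => hT.1 a.1, fun a b hab => hT.2 a.1 b.1 (fun h => hab (Subtype.ext h))⟩
  have hqs : StronglyConnected (fun a b : {w : V // w ∉ S} => r a.1 b.1) := by
    intro a b
    have h := rtg_subtype a.2 (hstr a.1 b.1 a.2 b.2) b.2
    simpa using h
  have h3 : 3 ≤ Fintype.card {w : V // w ∉ S} :=
    three_le_card hqT hqs (u := ⟨x, hx⟩) (v := ⟨y, hy⟩)
      (fun h => hxy (congrArg Subtype.val h))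
  obtain ⟨a0, l0, hC0, hnd0, hall0⟩ := ham_cycle hqT hqs h3
  obtain ⟨l1, hC1, hnd1, hmem1⟩ := cycle_rotate hC0 hnd0 (hall0 ⟨x, hx⟩)
  set L : List V := l1.map Subtype.val with hLdef
  have hCV : Chain r x (L ++ [x]) := by
    have h := chainC_map (R := fun a b : {w : V // w ∉ S} => r a.1 b.1)
      Subtype.val (fun a b h => h) hC1
    simpa [hLdef] using h
  have hndV : (x :: L).Nodup := by
    have h := hnd1.map Subtype.val_injective
    simpa [hLdef] using h
  have hLS : ∀ w ∈ x :: L, w ∉ S := by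
    intro w hw
    rcases mem_cons.1 hw with rfl | hw'
    · exact hx
    · obtain ⟨u, _, rfl⟩ := mem_map.1 hw'
      exact u.2
  have hcov : ∀ w : V, w ∉ S → w ∈ x :: L := by
    intro w hw
    have h1 : (⟨w, hw⟩ : {w : V // w ∉ S}) ∈ ⟨x, hx⟩ :: l1 := (hmem1 _).2 (hall0 _)
    rcases mem_cons.1 h1 with h | h
    · exact mem_cons.2 (Or.inl (congrArg Subtype.val h))
    · exact mem_cons.2 (Or.inr (mem_map_of_mem h))
  have hyL : y ∈ L := by
    rcases mem_cons.1 (hcov y hy) with h | h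
    · exact absurd h hxy.symm
    · exact h
  obtain ⟨t1, t2, hLsplit⟩ := append_of_mem hyL
  have hCsplit : Chain r x (t1 ++ y :: (t2 ++ [x])) := by
    rw [hLsplit] at hCV
    simpa using hCV
  rw [chainC_split] at hCsplit
  obtain ⟨hP1c, hP2c⟩ := hCsplit
  have hndV' : (x :: (t1 ++ y :: t2)).Nodup := hLsplit ▸ hndV
  have hxnot : x ∉ t1 ++ y :: t2 := (nodup_cons.1 hndV').1
  have hnd2 : (t1 ++ y :: t2).Nodup := (nodup_cons.1 hndV').2
  rw [nodup_append'] at hnd2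
  obtain ⟨ht1nd, hyt2nd, hdisj⟩ := hnd2
  have hxt1 : x ∉ t1 := fun h => hxnot (mem_append.2 (Or.inl h))
  have hxt2 : x ∉ t2 := fun h => hxnot (mem_append.2 (Or.inr (mem_cons_of_mem _ h)))
  have hyt1 : y ∉ t1 := fun h => hdisj h (mem_cons_self)
  have hyt2 : y ∉ t2 := (nodup_cons.1 hyt2nd).1
  have ht2nd : t2.Nodup := (nodup_cons.1 hyt2nd).2
  set P1 : List V := x :: (t1 ++ [y]) with hP1def
  set P2 : List V := y :: (t2 ++ [x]) with hP2def
  have hP1 : IsDipath r x y P1 :=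
    mk_dipath hxy ht1nd
      (fun w hw => ⟨fun h => hxt1 (h ▸ hw), fun h => hyt1 (h ▸ hw)⟩) hP1c
  have hP2 : IsDipath r y x P2 :=
    mk_dipath hxy.symm ht2nd
      (fun w hw => ⟨fun h => hyt2 (h ▸ hw), fun h => hxt2 (h ▸ hw)⟩) hP2c
  have hP1sub : ∀ w ∈ P1, w ∈ x :: L := by
    intro w hw
    rw [hP1def] at hw
    rcases mem_cons.1 hw with rfl | hw'
    · exact mem_cons_self
    · rcases mem_append.1 hw' with h | h
      · exact mem_cons.2 (Or.inr (hLsplit ▸ mem_append.2 (Or.inl h)))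
      · simp only [mem_singleton] at h
        subst h
        exact mem_cons.2 (Or.inr hyL)
  have hP2sub : ∀ w ∈ P2, w ∈ x :: L := by
    intro w hw
    rw [hP2def] at hw
    rcases mem_cons.1 hw with rfl | hw'
    · exact mem_cons.2 (Or.inr hyL)
    · rcases mem_append.1 hw' with h | h
      · exact mem_cons.2 (Or.inr (hLsplit ▸ mem_append.2 (Or.inr (mem_cons_of_mem _ h))))
      · simp only [mem_singleton] at h
        subst h
        exact mem_cons_self
  set f : List V → List V :=
    fun l => if List.Chain' r (x :: l ++ [y]) then x :: l ++ [y] else y :: l ++ [x] with hfdef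
  have hfdip : ∀ l ∈ cs, IsDipath r x y (f l) ∨ IsDipath r y x (f l) := by
    intro l hl
    obtain ⟨hne0, hlen2, hnd0, hneel, hch⟩ := hpc l hl
    by_cases h : List.Chain' r (x :: l ++ [y])
    · left
      rw [hfdef]
      simp only [if_pos h]
      exact mk_dipath hxy hnd0 hneel h
    · right
      rw [hfdef]
      simp only [if_neg h]
      rcases hch with hch | hch
      · exact absurd hch h
      · exact mk_dipath hxy.symm hnd0 (fun w hw => ⟨(hneel w hw).2, (hneel w hw).1⟩) hch
  have hfel : ∀ (l : List V), ∀ w ∈ f l, w = x ∨ w = y ∨ w ∈ l := by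
    intro l w hw
    rw [hfdef] at hw
    by_cases h : List.Chain' r (x :: l ++ [y]) <;>
      simp only [if_pos, if_neg, h, if_true, if_false] at hw <;>
      · rcases mem_cons.1 hw with rfl | hw'
        · tauto
        · rcases mem_append.1 hw' with h' | h'
          · exact Or.inr (Or.inr h')
          · simp only [mem_singleton] at h'
            tauto
  have hlf : ∀ (l : List V), ∀ w ∈ l, w ∈ f l := by
    intro l w hw
    rw [hfdef]
    by_cases h : List.Chain' r (x :: l ++ [y]) <;>
      simp only [if_pos, if_neg, h, if_true, if_false] <;>
      exact mem_cons.2 (Or.inr (mem_append.2 (Or.inl hw)))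
  set PS : List (List V) := P1 :: P2 :: cs.map f with hPSdef
  have hPSlen : PS.length = k + 2 := by rw [hPSdef]; simp [hlen]
  -- elements of P1/P2 are outside S
  have hP1S : ∀ w ∈ P1, w ∉ S := fun w hw => hLS w (hP1sub w hw)
  have hP2S : ∀ w ∈ P2, w ∉ S := fun w hw => hLS w (hP2sub w hw)
  -- f l determines l
  have hfcases : ∀ l : List V, f l = x :: l ++ [y] ∨ f l = y :: l ++ [x] := by
    intro l
    by_cases h : List.Chain' r (x :: l ++ [y])
    · exact Or.inl (by rw [hfdef]; exact if_pos h)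
    · exact Or.inr (by rw [hfdef]; exact if_neg h)
  have hfinj : ∀ l l' : List V, f l = f l' → l = l' := by
    intro l l' heq
    rcases hfcases l with h | h <;> rcases hfcases l' with h' | h' <;>
        rw [h, h'] at heq <;> injection heq with h1 h2
    · exact (append_inj' h2 rfl).1
    · exact absurd h1 hxy
    · exact absurd h1 hxy.symm
    · exact (append_inj' h2 rfl).1
  have hcsdisj : Pairwise List.Disjoint cs := (nodup_flatten.1 hnd).2
  have hcsne : ∀ l ∈ cs, l ≠ [] := fun l hl => (hpc l hl).1
  -- P1, P2 not connector paths
  have hfnotP1 : ∀ l ∈ cs, f l ≠ P1 := by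
    intro l hl heq
    obtain ⟨w, hwl⟩ := exists_mem_of_ne_nil l (hcsne l hl)
    have hwS' : w ∈ S := hwS l hl w hwl
    have hwP1 : w ∈ P1 := heq ▸ hlf l w hwl
    exact hP1S w hwP1 hwS'
  have hfnotP2 : ∀ l ∈ cs, f l ≠ P2 := by
    intro l hl heq
    obtain ⟨w, hwl⟩ := exists_mem_of_ne_nil l (hcsne l hl)
    have hwS' : w ∈ S := hwS l hl w hwl
    have hwP2 : w ∈ P2 := heq ▸ hlf l w hwl
    exact hP2S w hwP2 hwS'
  have hP1P2 : P1 ≠ P2 := by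
    rw [hP1def, hP2def]
    intro h
    injection h with h1 _
    exact hxy h1
  have hPSnd : PS.Nodup := by
    rw [hPSdef]
    refine nodup_cons.2 ⟨?_, nodup_cons.2 ⟨?_, ?_⟩⟩
    · intro h
      rcases mem_cons.1 h with h | h
      · exact hP1P2 h
      · obtain ⟨l, hl, heq⟩ := mem_map.1 h
        exact hfnotP1 l hl heq
    · intro h
      obtain ⟨l, hl, heq⟩ := mem_map.1 h
      exact hfnotP2 l hl heq
    · refine (pairwise_map).2 ?_
      refine hcsdisj.imp_of_mem ?_
      intro l l' hl hl' hdisj' heq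
      have : l = l' := hfinj l l' heq
      subst this
      obtain ⟨w, hwl⟩ := exists_mem_of_ne_nil l (hcsne l hl)
      exact hdisj' hwl hwl
  -- internal disjointness, pairwise on PS
  have hD : PS.Pairwise (fun p p' => ∀ w, w ∈ p → w ∈ p' → w = x ∨ w = y) := by
    rw [hPSdef]
    refine pairwise_cons.2 ⟨?_, pairwise_cons.2 ⟨?_, ?_⟩⟩
    · intro p hp w hw1 hw2
      rcases mem_cons.1 hp with rfl | hp'
      · -- p = P2
        rw [hP1def] at hw1
        rw [hP2def] at hw2
        rcases mem_cons.1 hw1 with rfl | hw1'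
        · exact Or.inl rfl
        rcases mem_append.1 hw1' with h1 | h1
        · rcases mem_cons.1 hw2 with rfl | hw2'
          · exact Or.inr rfl
          rcases mem_append.1 hw2' with h2 | h2
          · exact absurd (mem_cons_of_mem _ h2) (hdisj h1)
          · simp only [mem_singleton] at h2
            exact Or.inl h2
        · simp only [mem_singleton] at h1
          exact Or.inr h1
      · obtain ⟨l, hl, rfl⟩ := mem_map.1 hp'
        rcases hfel l w hw2 with h | h | h
        · exact Or.inl h
        · exact Or.inr h
        · exact absurd (hwS l hl w h) (hP1S w hw1)
    · intro p hp w hw1 hw2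
      obtain ⟨l, hl, rfl⟩ := mem_map.1 hp
      rcases hfel l w hw2 with h | h | h
      · exact Or.inl h
      · exact Or.inr h
      · exact absurd (hwS l hl w h) (hP2S w hw1)
    · refine (pairwise_map).2 ?_
      refine hcsdisj.imp_of_mem ?_
      intro l l' _ _ hdisj' w hw1 hw2
      rcases hfel l w hw1 with h | h | h
      · exact Or.inl h
      · exact Or.inr h
      · rcases hfel l' w hw2 with h' | h' | h'
        · exact Or.inl h'
        · exact Or.inr h'
        · exact absurd h' (hdisj' h)
  -- all members are dipaths
  have hdip : ∀ p ∈ PS, IsDipath r x y p ∨ IsDipath r y x p := by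
    intro p hp
    rw [hPSdef] at hp
    rcases mem_cons.1 hp with rfl | hp
    · exact Or.inl hP1
    rcases mem_cons.1 hp with rfl | hp
    · exact Or.inr hP2
    obtain ⟨l, hl, rfl⟩ := mem_map.1 hp
    exact hfdip l hl
  -- coverage
  have hcover : ∀ w : V, ∃ p ∈ PS, w ∈ p := by
    intro w
    by_cases hw : w ∈ S
    · obtain ⟨l, hl, hwl⟩ := mem_flatten.1 hw
      exact ⟨f l, by rw [hPSdef]; exact mem_cons.2 (Or.inr (mem_cons.2 (Or.inr
        (mem_map_of_mem hl)))), hlf l w hwl⟩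
    · have hwL := hcov w hw
      have hP1m : P1 ∈ PS := by rw [hPSdef]; exact mem_cons_self
      have hP2m : P2 ∈ PS := by rw [hPSdef]; exact mem_cons.2 (Or.inr (mem_cons_self))
      rcases mem_cons.1 hwL with rfl | hwL'
      · exact ⟨P1, hP1m, by rw [hP1def]; exact mem_cons_self⟩
      rw [hLsplit] at hwL'
      rcases mem_append.1 hwL' with h | h
      · exact ⟨P1, hP1m, by rw [hP1def]; exact mem_cons.2 (Or.inr (mem_append.2 (Or.inl h)))⟩
      rcases mem_cons.1 h with rfl | h
      · exact ⟨P2, hP2m, by rw [hP2def]; exact mem_cons_self⟩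
      · exact ⟨P2, hP2m, by rw [hP2def]; exact mem_cons.2 (Or.inr (mem_append.2 (Or.inl h)))⟩
  -- package
  refine ⟨fun i => PS.get (Fin.cast hPSlen.symm i), ?_, ?_, ?_, ?_⟩
  · intro i j hij
    have h1 : Fin.cast hPSlen.symm i = Fin.cast hPSlen.symm j :=
      nodup_iff_injective_get.1 hPSnd hij
    have h2 := congrArg (Fin.cast hPSlen) h1
    simpa using h2
  · intro i
    show IsDipath r x y (PS.get (Fin.cast hPSlen.symm i)) ∨
      IsDipath r y x (PS.get (Fin.cast hPSlen.symm i))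
    exact hdip _ (get_mem PS (Fin.cast hPSlen.symm i))
  · intro i j hij w hwi hwj
    have hij' : Fin.cast hPSlen.symm i ≠ Fin.cast hPSlen.symm j := by
      intro h
      apply hij
      have h2 := congrArg (Fin.cast hPSlen) h
      simpa using h2
    rcases lt_or_gt_of_ne hij' with h | h
    · exact pairwise_iff_get.1 hD _ _ h w hwi hwj
    · exact pairwise_iff_get.1 hD _ _ h w hwj hwi
  · intro w
    obtain ⟨p, hp, hwp⟩ := hcover w
    obtain ⟨n, hn⟩ := mem_iff_get.1 hp
    refine ⟨Fin.cast hPSlen n, ?_⟩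
    show w ∈ PS.get (Fin.cast hPSlen.symm (Fin.cast hPSlen n))
    have he : Fin.cast hPSlen.symm (Fin.cast hPSlen n) = n := by
      apply Fin.ext
      rfl
    rw [he, hn]
    exact hwp
end

section
/- Let k ≥ 0 be an integer, let T be a (2k+1)-strong tournament, and let x, y be distinct vertices of T such that there is no directed path of length 2 from x to y and no directed path of length 2 from y to x. Then there exist at least 2k+1 internally disjoint directed paths of length 3 between x and y (each directed from x to y or from y to x). -/
variable {V : Type*}

-- matching lemma
lemma exists_matching [Fintype V] (r : V → V → Prop) (hT : IsTournament r)
    (k : ℕ) (hstrong : KStrong r (2 * k + 1)) (x y : V) (hxy : x ≠ y)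
    (hrxy : r x y)
    (hxy2 : ¬ ∃ w : V, r x w ∧ r w y) (hyx2 : ¬ ∃ w : V, r y w ∧ r w x) :
    ∃ a b : Fin (2 * k + 1) → V, Function.Injective a ∧ Function.Injective b ∧
      (∀ i j, a i ≠ b j) ∧
      ∀ i, r x (a i) ∧ a i ≠ y ∧ r (b i) x ∧ b i ≠ y ∧ r (a i) (b i) := by
  classical
  obtain ⟨hirr, hone⟩ := hT
  have hnyx : ¬ r y x := (hone x y hxy).mp hrxy
  -- key symmetric facts
  have key1 : ∀ w, w ≠ x → w ≠ y → (r x w ↔ r y w) := by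
    intro w hwx hwy
    constructor
    · intro h
      have : ¬ r w y := fun hc => hxy2 ⟨w, h, hc⟩
      exact (hone y w (Ne.symm hwy)).mpr this
    · intro h
      have : ¬ r w x := fun hc => hyx2 ⟨w, h, hc⟩
      exact (hone x w (Ne.symm hwx)).mpr this
  set A : Finset V := Finset.univ.filter (fun w => r x w ∧ w ≠ y) with hA
  set B : Finset V := Finset.univ.filter (fun w => r w x ∧ w ≠ y) with hB
  have memA : ∀ w, w ∈ A ↔ (r x w ∧ w ≠ y) := by intro w; simp [hA]
  have memB : ∀ w, w ∈ B ↔ (r w x ∧ w ≠ y) := by intro w; simp [hB]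
  have hxA : x ∉ A := fun h => hirr x ((memA x).mp h).1
  have hxB : x ∉ B := fun h => hirr x ((memB x).mp h).1
  have hyA : y ∉ A := fun h => ((memA y).mp h).2 rfl
  have hyB : y ∉ B := fun h => ((memB y).mp h).2 rfl
  have hAB : ∀ w, w ∈ A → w ∉ B := by
    intro w hw hw'
    have h1 := ((memA w).mp hw).1
    have h2 := ((memB w).mp hw').1
    have hwx : w ≠ x := fun h => hirr x (h ▸ h1)
    exact ((hone x w (Ne.symm hwx)).mp h1) h2
  have hBmem : ∀ w, r w x → w ≠ y → w ∈ B := fun w h1 h2 => (memB w).mpr ⟨h1, h2⟩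
  have hAmem : ∀ w, r x w → w ≠ y → w ∈ A := fun w h1 h2 => (memA w).mpr ⟨h1, h2⟩
  -- A nonempty
  have hAne : A.Nonempty := by
    rcases Relation.ReflTransGen.cases_head
        (hstrong.2 ∅ (by simp) y x (Set.notMem_empty y) (Set.notMem_empty x)) with h | ⟨c, hc, -⟩
    · exact absurd h (Ne.symm hxy)
    · obtain ⟨-, -, hyc⟩ := hc
      have hcy : c ≠ y := fun h => hirr y (h ▸ hyc)
      have hcx : c ≠ x := fun h => hnyx (h ▸ hyc)
      exact ⟨c, hAmem c ((key1 c hcx hcy).mpr hyc) hcy⟩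
  -- the cover contradiction
  have hcover : ∀ S : Finset V, S.card ≤ 2 * k → x ∉ S → y ∉ S →
      (∀ a ∈ A, a ∉ S → ∀ b ∈ B, b ∉ S → ¬ r a b) → False := by
    intro S hcard hxS hyS hcov
    by_cases hBS : ∀ b ∈ B, b ∈ S
    · -- B ⊆ S, so |B| ≤ 2k ; x has no in-neighbors outside B
      obtain ⟨a, ha⟩ := hAne
      have haB : a ∉ B := hAB a ha
      have hax : a ≠ x := fun h => hxA (h ▸ ha)
      have hBcard : (↑B : Set V).ncard < 2 * k + 1 := by
        rw [Set.ncard_coe_finset]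
        have : B.card ≤ S.card := Finset.card_le_card (fun b hb => hBS b hb)
        omega
      have hreach := hstrong.2 ↑B hBcard a x (by simpa using haB) (by simpa using hxB)
      rcases Relation.ReflTransGen.cases_tail hreach with h | ⟨c, -, hc⟩
      · exact hax h.symm
      · obtain ⟨hcB, -, hcx⟩ := hc
        have hcx' : c ≠ x := fun h => hirr x (h ▸ hcx)
        by_cases hcy : c = y
        · exact hnyx (hcy ▸ hcx)
        · exact hcB (by simpa using hBmem c hcx hcy)
    · push_neg at hBS
      obtain ⟨b, hbB, hbS⟩ := hBS
      have hScard : (↑S : Set V).ncard < 2 * k + 1 := by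
        rw [Set.ncard_coe_finset]; omega
      have hreach := hstrong.2 ↑S hScard x b (by simpa using hxS) (by simpa using hbS)
      -- reachable set from x is contained in {x, y} ∪ (A \ S)
      have hclosed : ∀ v, Relation.ReflTransGen
          (fun a b => a ∉ (↑S : Set V) ∧ b ∉ (↑S : Set V) ∧ r a b) x v →
          v = x ∨ v = y ∨ (v ∈ A ∧ v ∉ S) := by
        intro v hv
        induction hv with
        | refl => exact Or.inl rfl
        | @tail c v h1 h2 ih =>
          obtain ⟨-, hvS, hcv⟩ := h2
          have hvS' : v ∉ S := by simpa using hvS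
          rcases ih with hcx | hcy | ⟨hcA, hcS⟩
          · -- step from x
            rw [hcx] at hcv
            by_cases hvy : v = y
            · exact Or.inr (Or.inl hvy)
            · exact Or.inr (Or.inr ⟨hAmem v hcv hvy, hvS'⟩)
          · -- step from y
            rw [hcy] at hcv
            by_cases hvx : v = x
            · exact Or.inl hvx
            · by_cases hvy : v = y
              · exact Or.inr (Or.inl hvy)
              · exact Or.inr (Or.inr ⟨hAmem v ((key1 v hvx hvy).mpr hcv) hvy, hvS'⟩)
          · -- step from A \ S
            have hxc : r x c := ((memA c).mp hcA).1
            have hcx : c ≠ x := fun h => hirr x (h ▸ hxc)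
            by_cases hvy : v = y
            · exact Or.inr (Or.inl hvy)
            by_cases hvx : v = x
            · rw [hvx] at hcv
              exact absurd hcv ((hone x c (Ne.symm hcx)).mp hxc)
            by_cases hxv : r x v
            · exact Or.inr (Or.inr ⟨hAmem v hxv hvy, hvS'⟩)
            · have hvxr : r v x := (hone v x hvx).mpr hxv
              exact absurd hcv (hcov c hcA hcS v (hBmem v hvxr hvy) hvS')
      rcases hclosed b hreach with hbx | hby | ⟨hbA, -⟩
      · exact hirr x (hbx ▸ ((memB b).mp hbB).1)
      · exact hyB (hby ▸ hbB)
      · exact hAB b hbA hbB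
  -- |A| ≥ 2k+1
  have hAcard : 2 * k + 1 ≤ A.card := by
    by_contra h
    exact hcover A (by omega) hxA hyA (fun a ha ha' _ _ _ => (ha' ha).elim)
  set d := A.card - (2 * k + 1) with hd
  have hAd : A.card = 2 * k + 1 + d := by omega
  set t : {a : V // a ∈ A} → Finset (V ⊕ Fin d) := fun a =>
    (B.filter (fun b => r a.1 b)).image Sum.inl ∪ Finset.univ.image Sum.inr with ht
  have hall : ∀ s : Finset {a : V // a ∈ A}, s.card ≤ (s.biUnion t).card := by
    intro s
    rcases s.eq_empty_or_nonempty with rfl | ⟨a0, ha0⟩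
    · simp
    set W : Finset V := s.image Subtype.val with hW
    have hWcard : W.card = s.card := Finset.card_image_of_injective _ Subtype.val_injective
    have hWA : W ⊆ A := by
      intro w hw
      rw [hW, Finset.mem_image] at hw
      obtain ⟨a, -, rfl⟩ := hw
      exact a.2
    set N : Finset V := B.filter (fun b => ∃ a ∈ W, r a b) with hN
    have hdisj : Disjoint (N.image Sum.inl) ((Finset.univ : Finset (Fin d)).image Sum.inr) := by
      rw [Finset.disjoint_left]
      rintro z hz1 hz2
      rw [Finset.mem_image] at hz1 hz2
      obtain ⟨b, -, rfl⟩ := hz1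
      obtain ⟨j, -, hj⟩ := hz2
      exact Sum.inl_ne_inr hj.symm
    have hsub : N.image Sum.inl ∪ Finset.univ.image Sum.inr ⊆ s.biUnion t := by
      intro z hz
      rw [Finset.mem_union] at hz
      rcases hz with hz | hz
      · rw [Finset.mem_image] at hz
        obtain ⟨b, hb, rfl⟩ := hz
        rw [hN, Finset.mem_filter] at hb
        obtain ⟨hbB, a, haW, hab⟩ := hb
        rw [hW, Finset.mem_image] at haW
        obtain ⟨a', ha's, rfl⟩ := haW
        refine Finset.mem_biUnion.mpr ⟨a', ha's, ?_⟩
        rw [ht]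
        exact Finset.mem_union_left _
          (Finset.mem_image_of_mem _ (Finset.mem_filter.mpr ⟨hbB, hab⟩))
      · refine Finset.mem_biUnion.mpr ⟨a0, ha0, ?_⟩
        rw [ht]
        exact Finset.mem_union_right _ hz
    have hcard2 : N.card + d ≤ (s.biUnion t).card := by
      have hle := Finset.card_le_card hsub
      rwa [Finset.card_union_of_disjoint hdisj,
        Finset.card_image_of_injective _ Sum.inl_injective,
        Finset.card_image_of_injective _ Sum.inr_injective, Finset.card_univ,
        Fintype.card_fin] at hle
    refine le_trans ?_ hcard2
    by_contra hcon
    push_neg at hcon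
    have hWb : W.card ≤ A.card := Finset.card_le_card hWA
    refine hcover ((A \ W) ∪ N) ?_ ?_ ?_ ?_
    · have h1 : (A \ W).card = A.card - W.card := Finset.card_sdiff_of_subset hWA
      have h2 := Finset.card_union_le (A \ W) N
      omega
    · intro hx'
      rcases Finset.mem_union.mp hx' with h' | h'
      · exact hxA (Finset.mem_sdiff.mp h').1
      · exact hxB (Finset.mem_filter.mp h').1
    · intro hy'
      rcases Finset.mem_union.mp hy' with h' | h'
      · exact hyA (Finset.mem_sdiff.mp h').1
      · exact hyB (Finset.mem_filter.mp h').1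
    · intro a haA haS b hbB hbS hab
      have haW : a ∈ W := by
        by_contra haW
        exact haS (Finset.mem_union_left _ (Finset.mem_sdiff.mpr ⟨haA, haW⟩))
      exact hbS (Finset.mem_union_right _ (Finset.mem_filter.mpr ⟨hbB, a, haW, hab⟩))
  obtain ⟨f, hfinj, hft⟩ := (Finset.all_card_le_biUnion_card_iff_exists_injective t).mp hall
  set C : Finset {a : V // a ∈ A} := Finset.univ.filter (fun a => (f a).isLeft) with hC
  have hCc : (Finset.univ.filter (fun a : {a : V // a ∈ A} => ¬ (f a).isLeft)).card ≤ d := by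
    have hmem : ∀ a ∈ Finset.univ.filter (fun a : {a : V // a ∈ A} => ¬ (f a).isLeft),
        f a ∈ (Finset.univ.image Sum.inr : Finset (V ⊕ Fin d)) := by
      intro a ha
      rw [Finset.mem_filter] at ha
      have h' := hft a
      rw [ht] at h'
      rcases Finset.mem_union.mp h' with h'' | h''
      · rw [Finset.mem_image] at h''
        obtain ⟨b, -, hb⟩ := h''
        exact absurd (by rw [← hb]; rfl) ha.2
      · exact h''
    have hle := Finset.card_le_card_of_injOn f hmem (fun a _ b _ h => hfinj h)
    calc (Finset.univ.filter (fun a : {a : V // a ∈ A} => ¬ (f a).isLeft)).card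
        ≤ ((Finset.univ : Finset (Fin d)).image Sum.inr : Finset (V ⊕ Fin d)).card := hle
      _ = d := by
          rw [Finset.card_image_of_injective _ Sum.inr_injective, Finset.card_univ,
            Fintype.card_fin]
  have hCcard : 2 * k + 1 ≤ C.card := by
    have hsplit := Finset.card_filter_add_card_filter_not
      (s := (Finset.univ : Finset {a : V // a ∈ A}))
      (p := fun a => (f a).isLeft)
    have huniv : (Finset.univ : Finset {a : V // a ∈ A}).card = A.card := by
      rw [Finset.card_univ, Fintype.card_coe]
    rw [hC]
    omega
  obtain ⟨C', hC'sub, hC'card⟩ := Finset.exists_subset_card_eq hCcard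
  set e := Finset.equivFinOfCardEq hC'card with he
  set aι : Fin (2 * k + 1) → {a : V // a ∈ A} := fun i => (e.symm i).1 with haι
  have haιinj : Function.Injective aι :=
    fun i j h => e.symm.injective (Subtype.val_injective h)
  have hbex : ∀ i, ∃ bv : V, f (aι i) = Sum.inl bv := by
    intro i
    have h1 : aι i ∈ C := hC'sub (e.symm i).2
    rw [hC, Finset.mem_filter] at h1
    rcases hsum : f (aι i) with bv | j
    · exact ⟨bv, rfl⟩
    · rw [hsum] at h1
      simp at h1
  choose bf hbf using hbex
  have hbfB : ∀ i, bf i ∈ B ∧ r (aι i).1 (bf i) := by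
    intro i
    have h' := hft (aι i)
    rw [ht, hbf i] at h'
    rcases Finset.mem_union.mp h' with h'' | h''
    · rw [Finset.mem_image] at h''
      obtain ⟨b, hb, hbeq⟩ := h''
      obtain rfl : b = bf i := Sum.inl_injective hbeq
      exact ⟨(Finset.mem_filter.mp hb).1, (Finset.mem_filter.mp hb).2⟩
    · rw [Finset.mem_image] at h''
      obtain ⟨j, -, hj⟩ := h''
      exact absurd hj (by simp)
  refine ⟨fun i => (aι i).1, bf, fun i j h => haιinj (Subtype.val_injective h), ?_, ?_, ?_⟩
  · intro i j h
    apply haιinj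
    apply hfinj
    rw [hbf i, hbf j, h]
  · intro i j h
    refine hAB (aι i).1 (aι i).2 ?_
    have hb := (hbfB j).1
    rw [← h] at hb
    exact hb
  · intro i
    have hA' := (memA (aι i).1).mp (aι i).2
    have hB' := (memB (bf i)).mp (hbfB i).1
    exact ⟨hA'.1, hA'.2, hB'.1, hB'.2, (hbfB i).2⟩

lemma stmt14_aux [Fintype V] (r : V → V → Prop) (hT : IsTournament r)
    (k : ℕ) (hstrong : KStrong r (2 * k + 1)) (x y : V) (hxy : x ≠ y)
    (hrxy : r x y)
    (hxy2 : ¬ ∃ w : V, r x w ∧ r w y) (hyx2 : ¬ ∃ w : V, r y w ∧ r w x) :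
    ∃ ps : Fin (2 * k + 1) → List V, Function.Injective ps ∧
      (∀ i, (IsDipath r x y (ps i) ∨ IsDipath r y x (ps i)) ∧ (ps i).length = 4) ∧
      InternallyDisjoint x y ps := by
  obtain ⟨a, b, hainj, hbinj, hab, hprop⟩ :=
    exists_matching r hT k hstrong x y hxy hrxy hxy2 hyx2
  have hirr := hT.1
  have hone := hT.2
  refine ⟨fun i => [x, a i, b i, y], ?_, ?_, ?_⟩
  · intro i j h
    simp only [List.cons.injEq] at h
    exact hainj h.2.1
  · intro i
    obtain ⟨h1, h2, h3, h4, h5⟩ := hprop i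
    have hax : a i ≠ x := fun h => hirr x (h ▸ h1)
    have hbx : b i ≠ x := fun h => hirr x (h ▸ h3)
    have hnyb : ¬ r y (b i) := fun h => hyx2 ⟨b i, h, h3⟩
    have hby : r (b i) y := (hone (b i) y h4).mpr hnyb
    have habi : a i ≠ b i := hab i i
    refine ⟨Or.inl ⟨?_, ?_, rfl, rfl⟩, rfl⟩
    · simp [List.Chain', List.isChain_cons_cons]
      tauto
    · simp only [List.nodup_cons, List.mem_cons, List.mem_singleton, List.not_mem_nil,
        not_or, List.nodup_nil]
      tauto
  · intro i j hij w hwi hwj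
    simp only [List.mem_cons, List.mem_singleton, List.not_mem_nil, or_false] at hwi hwj
    rcases hwi with rfl | rfl | rfl | rfl
    · exact Or.inl rfl
    · rcases hwj with h | h | h | h
      · exact Or.inl h
      · exact absurd (hainj h) hij
      · exact absurd h (hab i j)
      · exact Or.inr h
    · rcases hwj with h | h | h | h
      · exact Or.inl h
      · exact absurd h.symm (hab j i)
      · exact absurd (hbinj h) hij
      · exact Or.inr h
    · exact Or.inr rfl


/-- In a `(2k+1)`-strong tournament, if two distinct vertices
`x, y` admit no directed path of length 2 in either direction, then there are at
least `2k+1` internally disjoint directed paths of length 3 between them. -/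
theorem stmt14 [Fintype V] (r : V → V → Prop) (hT : IsTournament r)
    (k : ℕ) (hstrong : KStrong r (2 * k + 1)) (x y : V) (hxy : x ≠ y)
    (hxy2 : ¬ ∃ w : V, r x w ∧ r w y) (hyx2 : ¬ ∃ w : V, r y w ∧ r w x) :
    ∃ ps : Fin (2 * k + 1) → List V, Function.Injective ps ∧
      (∀ i, (IsDipath r x y (ps i) ∨ IsDipath r y x (ps i)) ∧ (ps i).length = 4) ∧
      InternallyDisjoint x y ps := by
  by_cases hrxy : r x y
  · exact stmt14_aux r hT k hstrong x y hxy hrxy hxy2 hyx2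
  · have hryx : r y x := (hT.2 y x (Ne.symm hxy)).mpr hrxy
    obtain ⟨ps, hinj, hp, hd⟩ :=
      stmt14_aux r hT k hstrong y x (Ne.symm hxy) hryx hyx2 hxy2
    exact ⟨ps, hinj, fun i => ⟨(hp i).1.symm, (hp i).2⟩,
      fun i j hij w hwi hwj => (hd i j hij w hwi hwj).symm⟩
end
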